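/- arXiv:1608.04858 — 8 statements merged into one kernel-verified Lean document; each statement's English description precedes it below -/
import Mathlib

section
/- Let λ be a real number and x a real number. Suppose (B_{n,λ}(x))_{n≥0} and (B*_{n,λ}(x))_{n≥0} are families of real numbers satisfying, in ℝ[[t]], the identities (Σ_{n≥0} B_{n,λ}(x) tⁿ/n!)·(exp(L_λ(t)) − 1) = L_λ(t)·exp(x·L_λ(t)) and (Σ_{n≥0} B*_{n,λ}(x) tⁿ/n!)·(exp(L_λ(t)) − 1) = t·exp(x·L_λ(t)). Then for every n ≥ 0, B*_{n,λ}(x) = Σ_{l=0}^n C(n,l) λ^l b_l B_{n−l,λ}(x), where b_l are the Bernoulli numbers of the second kind. -/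
open PowerSeries

/-- `L_λ(t) = Σ_{k≥1} (-1)^(k-1) λ^(k-1) t^k / k`, the formal series of `(1/λ)log(1+λt)`. -/
noncomputable def Lser (lam : ℝ) : PowerSeries ℝ :=
  PowerSeries.mk fun k => if k = 0 then 0 else (-1) ^ (k - 1) * lam ^ (k - 1) / k

/-- The formal exponential `Σ_{m≥0} S^m/m!` of a power series `S` with zero constant term;
since `coeff n (S^m) = 0` for `m > n`, each coefficient is the finite sum below. -/
noncomputable def expPS (S : PowerSeries ℝ) : PowerSeries ℝ :=
  PowerSeries.mk fun n =>
    ∑ m ∈ Finset.range (n + 1), (PowerSeries.coeff n (S ^ m)) / m.factorial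

/-- The formal series `log(1+t) = Σ_{k≥1} (-1)^(k-1) t^k / k`. -/
noncomputable def logOnePlus : PowerSeries ℝ :=
  PowerSeries.mk fun k => if k = 0 then 0 else (-1) ^ (k - 1) / k

theorem carlitz_degenerate_eq_sum_kim_degenerate (lam x : ℝ) (B Bstar b : ℕ → ℝ)
    (hb : (PowerSeries.mk fun n => b n / n.factorial) * logOnePlus = PowerSeries.X)
    (hB : (PowerSeries.mk fun n => B n / n.factorial) * (expPS (Lser lam) - 1) =
      Lser lam * expPS (PowerSeries.C x * Lser lam))
    (hBstar : (PowerSeries.mk fun n => Bstar n / n.factorial) * (expPS (Lser lam) - 1) =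
      PowerSeries.X * expPS (PowerSeries.C x * Lser lam)) :
    ∀ n : ℕ, Bstar n =
      ∑ l ∈ Finset.range (n + 1), (n.choose l : ℝ) * lam ^ l * b l * B (n - l) := by
  have key1 : (PowerSeries.mk fun n => b n * lam ^ n / n.factorial) * Lser lam
      = PowerSeries.X := by
    ext n
    have h := congrArg (PowerSeries.coeff n) hb
    rw [PowerSeries.coeff_mul] at h ⊢
    calc ∑ p ∈ Finset.HasAntidiagonal.antidiagonal n,
          PowerSeries.coeff p.1 (PowerSeries.mk fun n => b n * lam ^ n / n.factorial) *
            PowerSeries.coeff p.2 (Lser lam)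
        = lam ^ (n - 1) * ∑ p ∈ Finset.HasAntidiagonal.antidiagonal n,
            PowerSeries.coeff p.1 (PowerSeries.mk fun n => b n / n.factorial) *
              PowerSeries.coeff p.2 logOnePlus := by
          rw [Finset.mul_sum]
          refine Finset.sum_congr rfl fun p hp => ?_
          have hn : p.1 + p.2 = n := Finset.HasAntidiagonal.mem_antidiagonal.mp hp
          simp only [PowerSeries.coeff_mk, Lser, logOnePlus]
          rcases Nat.eq_zero_or_pos p.2 with h2 | h2
          · simp [h2]
          · rw [if_neg (by omega), if_neg (by omega)]
            have hl : lam ^ p.1 * lam ^ (p.2 - 1) = lam ^ (n - 1) := by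
              rw [← pow_add]; congr 1; omega
            rw [← hl]; ring
      _ = lam ^ (n - 1) * PowerSeries.coeff n PowerSeries.X := by rw [h]
      _ = PowerSeries.coeff n PowerSeries.X := by
          rcases eq_or_ne n 1 with rfl | hn
          · simp
          · rw [PowerSeries.coeff_X, if_neg hn, mul_zero]
  have hE1 : expPS (Lser lam) - 1 ≠ 0 := by
    intro h0
    have h1 := congrArg (PowerSeries.coeff 1) h0
    simp [expPS, Lser, Finset.sum_range_succ, PowerSeries.coeff_one] at h1
  have key3 : (PowerSeries.mk fun n => Bstar n / n.factorial)
      = (PowerSeries.mk fun n => b n * lam ^ n / n.factorial) *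
        (PowerSeries.mk fun n => B n / n.factorial) := by
    apply mul_right_cancel₀ hE1
    rw [hBstar, mul_assoc, hB, ← mul_assoc, key1]
  intro n
  have h := congrArg (PowerSeries.coeff n) key3
  rw [PowerSeries.coeff_mk, PowerSeries.coeff_mul] at h
  simp only [PowerSeries.coeff_mk] at h
  rw [Finset.Nat.sum_antidiagonal_eq_sum_range_succ
    (fun i j => b i * lam ^ i / i.factorial * (B j / j.factorial))] at h
  have hn : (n.factorial : ℝ) ≠ 0 := Nat.cast_ne_zero.mpr n.factorial_ne_zero
  have h2 : Bstar n = (n.factorial : ℝ) *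
      ∑ i ∈ Finset.range (n + 1), b i * lam ^ i / i.factorial * (B (n - i) / (n - i).factorial) := by
    rw [← h]; field_simp
  rw [h2, Finset.mul_sum]
  refine Finset.sum_congr rfl fun l hl => ?_
  have hln : l ≤ n := Nat.lt_succ_iff.mp (Finset.mem_range.mp hl)
  have hc : ((n.choose l : ℝ)) * l.factorial * (n - l).factorial = n.factorial := by
    exact_mod_cast Nat.choose_mul_factorial_mul_factorial hln
  have hl1 : (l.factorial : ℝ) ≠ 0 := Nat.cast_ne_zero.mpr l.factorial_ne_zero
  have hl2 : ((n - l).factorial : ℝ) ≠ 0 := Nat.cast_ne_zero.mpr (n - l).factorial_ne_zero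
  rw [← hc]; field_simp
end

section
/- Let q be a real number with q > 0 and q ≠ 1, let w be a positive integer, and let (β_{n,q})_{n≥0} and (β_{n,q^w})_{n≥0} be the Carlitz Bernoulli numbers for parameters q and q^w respectively (each satisfying the Carlitz recurrence for its parameter). Then for every n ≥ 0 and every real x, β_{n,q}(wx) = [w]_q^{n−1} · Σ_{j=0}^{w−1} q^j · β_{n,q^w}(x + j/w). -/
/-- The `q`-number `[y]_q = (1 - q^y)/(1 - q)`, using the real power `q ^ y`. -/
noncomputable def qnum (q y : ℝ) : ℝ := (1 - q ^ y) / (1 - q)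

/-- `β` satisfies the Carlitz recurrence for parameter `Q`:
`β₀ = 1` and `Q(Qβ+1)^n - β_n = 1` if `n = 1`, `= 0` if `n > 1`. -/
def CarlitzRec (Q : ℝ) (β : ℕ → ℝ) : Prop :=
  β 0 = 1 ∧ ∀ n : ℕ, 1 ≤ n →
    Q * (∑ l ∈ Finset.range (n + 1), (n.choose l : ℝ) * Q ^ l * β l) - β n =
      if n = 1 then 1 else 0

/-- The Carlitz `Q`-Bernoulli polynomial `β_{n,Q}(x) = Σ_l C(n,l) [x]_Q^{n-l} Q^{lx} β_l`. -/
noncomputable def carlitzPoly (Q : ℝ) (β : ℕ → ℝ) (n : ℕ) (x : ℝ) : ℝ :=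
  ∑ l ∈ Finset.range (n + 1),
    (n.choose l : ℝ) * qnum Q x ^ (n - l) * Q ^ ((l : ℝ) * x) * β l

open Finset

/-- auxiliary: `(m+1)/[m+1]_Q`. -/
noncomputable def cg (Q : ℝ) (m : ℕ) : ℝ := ((m : ℝ) + 1) * (1 - Q) / (1 - Q ^ (m + 1))

/-- explicit formula candidate for Carlitz Q-Bernoulli numbers. -/
noncomputable def cb (Q : ℝ) (n : ℕ) : ℝ :=
  (1 - Q)⁻¹ ^ n * ∑ m ∈ range (n + 1), (n.choose m : ℝ) * (-1) ^ m * cg Q m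

lemma pow_ne_one_of (Q : ℝ) (hQ : 0 < Q) (hQ1 : Q ≠ 1) {k : ℕ} (hk : k ≠ 0) :
    Q ^ k ≠ 1 := by
  rcases lt_or_gt_of_ne hQ1 with h | h
  · exact ne_of_lt (pow_lt_one₀ hQ.le h hk)
  · exact ne_of_gt (one_lt_pow₀ h hk)

/-- inner binomial identity -/
lemma inner_binom (n m : ℕ) (hm : m ≤ n) (u v : ℝ) :
    ∑ l ∈ range (n + 1), (n.choose l : ℝ) * u ^ (n - l) * ((l.choose m : ℝ) * v ^ (l - m)) =
      (n.choose m : ℝ) * (u + v) ^ (n - m) := by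
  have h1 : ∀ l ∈ range m, (n.choose l : ℝ) * u ^ (n - l) * ((l.choose m : ℝ) * v ^ (l - m)) = 0 := by
    intro l hl
    rw [mem_range] at hl
    rw [Nat.choose_eq_zero_of_lt hl]
    ring
  have split : range (n+1) = Finset.Ico 0 m ∪ Finset.Ico m (n+1) := by
    rw [Finset.Ico_union_Ico_eq_Ico (Nat.zero_le m) (by omega), ← Finset.range_eq_Ico]
  rw [split, Finset.sum_union (Finset.Ico_disjoint_Ico_consecutive 0 m (n+1))]
  rw [Finset.sum_eq_zero (by simpa using h1), zero_add]
  rw [Finset.sum_Ico_eq_sum_range]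
  have hnm : n + 1 - m = (n - m) + 1 := by omega
  rw [hnm]
  have key : ∀ k ∈ range ((n - m) + 1),
      (n.choose (m + k) : ℝ) * u ^ (n - (m + k)) * (((m + k).choose m : ℝ) * v ^ (m + k - m)) =
      (n.choose m : ℝ) * (((n-m).choose k : ℝ) * u ^ ((n - m) - k) * v ^ k) := by
    intro k hk
    rw [mem_range] at hk
    have h2 : n.choose (m + k) * (m + k).choose m = n.choose m * (n - m).choose k := by
      have := Nat.choose_mul (n := n) (k := m + k) (s := m) (by omega)
      simpa using this
    have h3 : n - (m + k) = (n - m) - k := by omega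
    have h4 : m + k - m = k := by omega
    rw [h3, h4]
    have h2' : (n.choose (m + k) : ℝ) * ((m + k).choose m : ℝ) =
        (n.choose m : ℝ) * ((n - m).choose k : ℝ) := by exact_mod_cast congrArg (Nat.cast (R := ℝ)) h2
    linear_combination (u ^ ((n - m) - k) * v ^ k) * h2'
  rw [Finset.sum_congr rfl key, ← Finset.mul_sum]
  congr 1
  rw [add_comm u v, add_pow]
  apply Finset.sum_congr rfl
  intro k hk
  ring

/-- binomial swap lemma -/
lemma binom_swap (n : ℕ) (u v : ℝ) (h : ℕ → ℝ) :
    ∑ l ∈ range (n + 1), (n.choose l : ℝ) * u ^ (n - l) *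
        ∑ m ∈ range (l + 1), (l.choose m : ℝ) * v ^ (l - m) * h m =
      ∑ m ∈ range (n + 1), (n.choose m : ℝ) * (u + v) ^ (n - m) * h m := by
  have step1 : ∀ l ∈ range (n+1),
      (n.choose l : ℝ) * u ^ (n - l) * ∑ m ∈ range (l + 1), (l.choose m : ℝ) * v ^ (l - m) * h m
      = ∑ m ∈ range (n + 1), (n.choose l : ℝ) * u ^ (n - l) * ((l.choose m : ℝ) * v ^ (l - m) * h m) := by
    intro l hl
    rw [mem_range] at hl
    rw [Finset.mul_sum]
    rw [Finset.sum_subset (Finset.range_subset_range.2 (show l + 1 ≤ n + 1 by omega))]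
    intro m hm hm'
    rw [mem_range] at hm hm'
    rw [Nat.choose_eq_zero_of_lt (show l < m by omega)]
    ring
  rw [Finset.sum_congr rfl step1, Finset.sum_comm]
  apply Finset.sum_congr rfl
  intro m hm
  rw [mem_range] at hm
  have := inner_binom n m (by omega) u v
  calc ∑ l ∈ range (n+1), (n.choose l : ℝ) * u ^ (n - l) * ((l.choose m : ℝ) * v ^ (l - m) * h m)
      = (∑ l ∈ range (n+1), (n.choose l : ℝ) * u ^ (n - l) * ((l.choose m : ℝ) * v ^ (l - m))) * h m := by
        rw [Finset.sum_mul]; apply Finset.sum_congr rfl; intro l _; ring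
    _ = (n.choose m : ℝ) * (u + v) ^ (n - m) * h m := by rw [this]

/-- explicit formula for the Carlitz polynomial of `cb`. -/
lemma carlitzPoly_cb (Q : ℝ) (hQ : 0 < Q) (n : ℕ) (x : ℝ) :
    carlitzPoly Q (cb Q) n x =
      (1 - Q)⁻¹ ^ n *
        ∑ m ∈ range (n + 1), (n.choose m : ℝ) * (-1) ^ m * cg Q m * Q ^ ((m : ℝ) * x) := by
  have hrx : ∀ l : ℕ, Q ^ ((l : ℝ) * x) = (Q ^ x) ^ l := by
    intro l
    rw [mul_comm, Real.rpow_mul hQ.le, Real.rpow_natCast]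
  have key := binom_swap n (qnum Q x) (Q ^ x * (1 - Q)⁻¹)
      (fun m => (-1) ^ m * cg Q m * (1 - Q)⁻¹ ^ m * (Q ^ x) ^ m)
  have lhs_eq : carlitzPoly Q (cb Q) n x =
      ∑ l ∈ range (n + 1), (n.choose l : ℝ) * qnum Q x ^ (n - l) *
        ∑ m ∈ range (l + 1), (l.choose m : ℝ) * (Q ^ x * (1 - Q)⁻¹) ^ (l - m) *
          ((-1) ^ m * cg Q m * (1 - Q)⁻¹ ^ m * (Q ^ x) ^ m) := by
    unfold carlitzPoly cb
    apply Finset.sum_congr rfl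
    intro l hl
    rw [hrx l, Finset.mul_sum, Finset.mul_sum, Finset.mul_sum]
    apply Finset.sum_congr rfl
    intro m hm
    rw [mem_range] at hm
    have hml : m ≤ l := by omega
    have e1 : (Q ^ x) ^ l = (Q ^ x) ^ (l - m) * (Q ^ x) ^ m := by
      rw [← pow_add]; congr 1; omega
    have e2 : (1 - Q)⁻¹ ^ l = (1 - Q)⁻¹ ^ (l - m) * (1 - Q)⁻¹ ^ m := by
      rw [← pow_add]; congr 1; omega
    rw [e1, e2, mul_pow]
    ring
  rw [lhs_eq, key]
  rw [Finset.mul_sum]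
  apply Finset.sum_congr rfl
  intro m hm
  rw [mem_range] at hm
  have huv : qnum Q x + Q ^ x * (1 - Q)⁻¹ = (1 - Q)⁻¹ := by
    unfold qnum
    field_simp
    ring
  rw [huv, hrx m]
  have e3 : (1 - Q)⁻¹ ^ (n - m) * (1 - Q)⁻¹ ^ m = (1 - Q)⁻¹ ^ n := by
    rw [← pow_add]; congr 1; omega
  calc (n.choose m : ℝ) * (1 - Q)⁻¹ ^ (n - m) * ((-1) ^ m * cg Q m * (1 - Q)⁻¹ ^ m * (Q ^ x) ^ m)
      = ((1 - Q)⁻¹ ^ (n - m) * (1 - Q)⁻¹ ^ m) * ((n.choose m : ℝ) * (-1) ^ m * cg Q m * (Q ^ x) ^ m) := by ring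
    _ = _ := by rw [e3]

lemma alt_sum (n : ℕ) (hn : 1 ≤ n) :
    ∑ m ∈ range (n + 1), (n.choose m : ℝ) * (-1) ^ m * ((m : ℝ) + 1) =
      if n = 1 then -1 else 0 := by
  have hsplit : ∀ m : ℕ, (n.choose m : ℝ) * (-1) ^ m * ((m : ℝ) + 1) =
      (-1) ^ m * (n.choose m : ℝ) + (n.choose m : ℝ) * (-1) ^ m * (m : ℝ) := by
    intro m; ring
  rw [Finset.sum_congr rfl (fun m _ => hsplit m), Finset.sum_add_distrib]
  have h1 : ∑ m ∈ range (n + 1), (-1 : ℝ) ^ m * (n.choose m : ℝ) = 0 := by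
    have := Int.alternating_sum_range_choose (n := n)
    rw [if_neg (by omega)] at this
    exact_mod_cast this
  rw [h1, zero_add]
  -- second sum
  obtain ⟨p, rfl⟩ : ∃ p, n = p + 1 := ⟨n - 1, by omega⟩
  rw [Finset.sum_range_succ']
  simp only [Nat.cast_zero, mul_zero, add_zero]
  have hterm : ∀ m : ℕ, ((p+1).choose (m+1) : ℝ) * (-1) ^ (m+1) * ((m : ℝ) + 1) =
      -((p + 1 : ℝ) * ((-1) ^ m * (p.choose m : ℝ))) := by
    intro m
    have := Nat.add_one_mul_choose_eq p m
    have h' : ((p + 1 : ℕ) : ℝ) * (p.choose m : ℝ) = ((p+1).choose (m+1) : ℝ) * ((m + 1 : ℕ) : ℝ) := by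
      exact_mod_cast congrArg (Nat.cast (R := ℝ)) this
    push_cast at h' ⊢
    linear_combination (-1 : ℝ)^m * h'
  have hc : ∑ m ∈ range (p + 1), (-1:ℝ) ^ m * (p.choose m : ℝ) = if p = 0 then 1 else 0 := by
    have := Int.alternating_sum_range_choose (n := p)
    exact_mod_cast this
  push_cast
  calc ∑ k ∈ range (p+1), ((p+1).choose (k+1) : ℝ) * (-1) ^ (k+1) * ((k:ℝ) + 1)
      = ∑ k ∈ range (p+1), -((p + 1 : ℝ) * ((-1) ^ k * (p.choose k : ℝ))) :=
        Finset.sum_congr rfl (fun m _ => hterm m)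
    _ = -((p + 1 : ℝ) * ∑ k ∈ range (p+1), (-1) ^ k * (p.choose k : ℝ)) := by
        rw [Finset.mul_sum, ← Finset.sum_neg_distrib]
    _ = if p = 0 then -1 else 0 := by
        rw [hc]
        rcases Nat.eq_zero_or_pos p with h | h
        · subst h; norm_num
        · rw [if_neg (by omega), if_neg (by omega)]; ring

lemma cb_carlitz (Q : ℝ) (hQ : 0 < Q) (hQ1 : Q ≠ 1) : CarlitzRec Q (cb Q) := by
  have hQne : (1 : ℝ) - Q ≠ 0 := by
    intro h; apply hQ1; linarith
  have hQk : ∀ k : ℕ, k ≠ 0 → (1 : ℝ) - Q ^ k ≠ 0 := by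
    intro k hk h
    exact pow_ne_one_of Q hQ hQ1 hk (by linarith)
  constructor
  · have hcg0 : cg Q 0 = 1 := by
      unfold cg
      rw [pow_one]
      push_cast
      rw [zero_add, one_mul, div_self hQne]
    unfold cb
    rw [Finset.sum_range_one, hcg0]
    norm_num
  · intro n hn
    have hsum : ∑ l ∈ Finset.range (n + 1), (n.choose l : ℝ) * Q ^ l * cb Q l =
        carlitzPoly Q (cb Q) n 1 := by
      unfold carlitzPoly
      apply Finset.sum_congr rfl
      intro l hl
      have hq1 : qnum Q 1 = 1 := by
        unfold qnum
        rw [Real.rpow_one, div_self hQne]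
      have hql : Q ^ ((l : ℝ) * 1) = Q ^ l := by
        rw [mul_one, Real.rpow_natCast]
      rw [hq1, hql, one_pow]
      ring
    rw [hsum, carlitzPoly_cb Q hQ n 1]
    have hcb : cb Q n = (1 - Q)⁻¹ ^ n * ∑ m ∈ range (n + 1), (n.choose m : ℝ) * (-1) ^ m * cg Q m := rfl
    rw [hcb, Finset.mul_sum, Finset.mul_sum, Finset.mul_sum, ← Finset.sum_sub_distrib]
    have hterm : ∀ m ∈ range (n + 1),
        Q * ((1 - Q)⁻¹ ^ n * ((n.choose m : ℝ) * (-1) ^ m * cg Q m * Q ^ ((m : ℝ) * 1))) -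
          (1 - Q)⁻¹ ^ n * ((n.choose m : ℝ) * (-1) ^ m * cg Q m) =
        (1 - Q)⁻¹ ^ n * (1 - Q) * ((n.choose m : ℝ) * (-1) ^ (m + 1) * ((m : ℝ) + 1)) := by
      intro m _
      have hqm : Q ^ ((m : ℝ) * 1) = Q ^ m := by rw [mul_one, Real.rpow_natCast]
      rw [hqm]
      have hg : cg Q m * (Q ^ (m + 1) - 1) = -(((m : ℝ) + 1) * (1 - Q)) := by
        unfold cg
        rw [div_mul_eq_mul_div, div_eq_iff (hQk (m+1) (by omega))]
        ring
      have : Q * Q ^ m = Q ^ (m + 1) := by rw [pow_succ]; ring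
      calc Q * ((1 - Q)⁻¹ ^ n * ((n.choose m : ℝ) * (-1) ^ m * cg Q m * Q ^ m)) -
          (1 - Q)⁻¹ ^ n * ((n.choose m : ℝ) * (-1) ^ m * cg Q m)
          = (1 - Q)⁻¹ ^ n * ((n.choose m : ℝ) * (-1) ^ m) * (cg Q m * (Q ^ (m+1) - 1)) := by
            rw [← this]; ring
        _ = (1 - Q)⁻¹ ^ n * ((n.choose m : ℝ) * (-1) ^ m) * (-(((m : ℝ) + 1) * (1 - Q))) := by rw [hg]
        _ = _ := by ring
    rw [Finset.sum_congr rfl hterm, ← Finset.mul_sum]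
    have halt : ∑ m ∈ range (n + 1), (n.choose m : ℝ) * (-1) ^ (m + 1) * ((m : ℝ) + 1) =
        if n = 1 then 1 else 0 := by
      have := alt_sum n hn
      have h2 : ∑ m ∈ range (n + 1), (n.choose m : ℝ) * (-1) ^ (m + 1) * ((m : ℝ) + 1) =
          -∑ m ∈ range (n + 1), (n.choose m : ℝ) * (-1) ^ m * ((m : ℝ) + 1) := by
        rw [← Finset.sum_neg_distrib]
        apply Finset.sum_congr rfl
        intro m _; ring
      rw [h2, this]
      split <;> norm_num
    rw [halt]
    split
    · subst ‹n = 1›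
      rw [pow_one]
      field_simp
    · simp

lemma carlitz_unique (Q : ℝ) (hQ : ∀ k : ℕ, k ≠ 0 → Q ^ k ≠ 1) (β β' : ℕ → ℝ)
    (h : CarlitzRec Q β) (h' : CarlitzRec Q β') : β = β' := by
  funext n
  induction n using Nat.strong_induction_on with
  | _ n ih =>
    rcases Nat.eq_zero_or_pos n with h0 | h0
    · subst h0; rw [h.1, h'.1]
    · have e1 := h.2 n h0
      have e2 := h'.2 n h0
      rw [Finset.sum_range_succ] at e1 e2
      simp only [Nat.choose_self, Nat.cast_one, one_mul] at e1 e2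
      have hT : ∑ l ∈ range n, (n.choose l : ℝ) * Q ^ l * β l
            = ∑ l ∈ range n, (n.choose l : ℝ) * Q ^ l * β' l := by
        apply Finset.sum_congr rfl
        intro l hl
        rw [mem_range] at hl
        rw [ih l hl]
      rw [hT] at e1
      have key : (Q ^ n * Q - 1) * (β n - β' n) = 0 := by linear_combination e1 - e2
      have hne : Q ^ n * Q - 1 ≠ 0 := by
        have h2 := hQ (n + 1) (by omega)
        rw [pow_succ] at h2
        intro hcon; exact h2 (by linarith)
      rcases mul_eq_zero.1 key with hz | hz
      · exact absurd hz hne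
      · exact sub_eq_zero.1 hz

theorem carlitz_multiplication (q : ℝ) (hq : 0 < q) (hq1 : q ≠ 1) (w : ℕ) (hw : 0 < w)
    (βq βqw : ℕ → ℝ) (h1 : CarlitzRec q βq) (h2 : CarlitzRec (q ^ w) βqw) :
    ∀ (n : ℕ) (x : ℝ),
      carlitzPoly q βq n ((w : ℝ) * x) =
        qnum q w ^ ((n : ℤ) - 1) *
          ∑ j ∈ Finset.range w, q ^ j * carlitzPoly (q ^ w) βqw n (x + (j : ℝ) / w) := by
  intro n x
  have hqw : (0:ℝ) < q ^ w := pow_pos hq w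
  have hqw1 : q ^ w ≠ 1 := pow_ne_one_of q hq hq1 (by omega)
  have hk : ∀ k : ℕ, k ≠ 0 → q ^ k ≠ 1 := fun k h => pow_ne_one_of q hq hq1 h
  have hkw : ∀ k : ℕ, k ≠ 0 → (q ^ w) ^ k ≠ 1 := by
    intro k h
    rw [← pow_mul]
    exact hk (w * k) (by positivity)
  have hβq : βq = cb q := carlitz_unique q hk βq (cb q) h1 (cb_carlitz q hq hq1)
  have hβqw : βqw = cb (q ^ w) :=
    carlitz_unique _ hkw _ _ h2 (cb_carlitz _ hqw hqw1)
  subst hβq hβqw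
  have hA : (1:ℝ) - q ^ w ≠ 0 := fun h => hqw1 (by linarith)
  have hB : (1:ℝ) - q ≠ 0 := fun h => hq1 (by linarith)
  have hw' : (w:ℝ) ≠ 0 := Nat.cast_ne_zero.2 (by omega)
  have hqnum : qnum q w = (1 - q ^ w) / (1 - q) := by
    unfold qnum; rw [Real.rpow_natCast]
  -- rewrite each carlitz polynomial via the explicit formula
  rw [carlitzPoly_cb q hq n ((w:ℝ) * x)]
  have hpoly : ∀ j ∈ range w, q ^ j * carlitzPoly (q ^ w) (cb (q ^ w)) n (x + (j:ℝ)/w)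
      = ∑ m ∈ range (n+1), (1 - q ^ w)⁻¹ ^ n *
          ((n.choose m : ℝ) * (-1) ^ m * cg (q ^ w) m * q ^ ((w:ℝ) * (m:ℝ) * x) *
            (q ^ (m+1)) ^ j) := by
    intro j hj
    rw [carlitzPoly_cb (q ^ w) hqw n, Finset.mul_sum, Finset.mul_sum]
    apply Finset.sum_congr rfl
    intro m hm
    have hexp : ((q:ℝ) ^ w) ^ ((m:ℝ) * (x + (j:ℝ)/w)) =
        q ^ ((w:ℝ) * (m:ℝ) * x) * q ^ (m * j) := by
      rw [← Real.rpow_natCast q w, ← Real.rpow_natCast q (m * j),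
        ← Real.rpow_mul hq.le, ← Real.rpow_add hq]
      congr 1
      push_cast
      field_simp
    have hq2 : q ^ j * q ^ (m * j) = (q ^ (m+1)) ^ j := by
      rw [← pow_add, ← pow_mul]
      congr 1
      ring
    rw [hexp, ← hq2]
    ring
  rw [Finset.sum_congr rfl hpoly, Finset.sum_comm]
  have hgeom : ∀ m : ℕ, ∑ j ∈ range w, ((q ^ (m+1)) ^ j : ℝ) =
      ((q ^ (m+1)) ^ w - 1) / (q ^ (m+1) - 1) :=
    fun m => geom_sum_eq (hk (m+1) (by omega)) w
  have hinner : ∀ m ∈ range (n+1),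
      ∑ j ∈ range w, (1 - q ^ w)⁻¹ ^ n *
          ((n.choose m : ℝ) * (-1) ^ m * cg (q ^ w) m * q ^ ((w:ℝ) * (m:ℝ) * x) *
            (q ^ (m+1)) ^ j)
      = (1 - q ^ w)⁻¹ ^ n *
          ((n.choose m : ℝ) * (-1) ^ m * cg (q ^ w) m * q ^ ((w:ℝ) * (m:ℝ) * x)) *
            (((q ^ (m+1)) ^ w - 1) / (q ^ (m+1) - 1)) := by
    intro m _
    rw [← hgeom m, Finset.mul_sum]
    apply Finset.sum_congr rfl
    intro j _
    ring
  rw [Finset.sum_congr rfl hinner, Finset.mul_sum]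
  have hcg : ∀ m : ℕ, cg (q ^ w) m * (((q ^ (m+1)) ^ w - 1) / (q ^ (m+1) - 1)) =
      cg q m * ((1 - q ^ w) / (1 - q)) := by
    intro m
    unfold cg
    have d1 : (1:ℝ) - (q ^ w) ^ (m+1) ≠ 0 := fun h => hkw (m+1) (by omega) (by linarith)
    have d2 : q ^ (m+1) - 1 ≠ 0 := fun h => hk (m+1) (by omega) (by linarith)
    have d3 : (1:ℝ) - q ^ (m+1) ≠ 0 := fun h => hk (m+1) (by omega) (by linarith)
    have hpw : ((q ^ (m+1)) ^ w : ℝ) = (q ^ w) ^ (m+1) := by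
      rw [← pow_mul, ← pow_mul, mul_comm]
    rw [hpw]
    field_simp
    ring
  have hconst : qnum q w ^ ((n:ℤ) - 1) * ((1 - q ^ w)⁻¹ ^ n * ((1 - q ^ w) / (1 - q))) =
      (1 - q)⁻¹ ^ n := by
    rw [hqnum]
    have hD : (1 - q ^ w) / (1 - q) ≠ 0 := div_ne_zero hA hB
    rw [zpow_sub_one₀ hD, zpow_natCast, div_pow]
    field_simp
    rw [← mul_pow, ← mul_pow, mul_one_div_cancel hA, mul_one_div_cancel hB]
  rw [Finset.mul_sum]
  apply Finset.sum_congr rfl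
  intro m _
  have hxx : (m:ℝ) * ((w:ℝ) * x) = (w:ℝ) * (m:ℝ) * x := by ring
  rw [hxx]
  linear_combination
    (-(qnum q w ^ ((n:ℤ) - 1) * (1 - q ^ w)⁻¹ ^ n * (n.choose m : ℝ) * (-1) ^ m *
        q ^ ((w:ℝ) * (m:ℝ) * x))) * hcg m -
    ((n.choose m : ℝ) * (-1) ^ m * cg q m * q ^ ((w:ℝ) * (m:ℝ) * x)) * hconst
end

section
/- Let q be a real number with q > 0 and q ≠ 1, let w₁, w₂ be positive integers, and let (β_{n,q^{w₁}})_{n≥0} and (β_{n,q^{w₂}})_{n≥0} be the Carlitz Bernoulli numbers for parameters q^{w₁} and q^{w₂} respectively. Then for every n ≥ 0 and every real x, [w₁]_q^{n−1} · Σ_{j=0}^{w₁−1} q^{w₂ j} · β_{n,q^{w₁}}(w₂x + (w₂/w₁)j) = [w₂]_q^{n−1} · Σ_{j=0}^{w₂−1} q^{w₁ j} · β_{n,q^{w₂}}(w₁x + (w₁/w₂)j). -/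
open Finset

noncomputable def cc (Q : ℝ) (i : ℕ) : ℝ := ((i:ℝ)+1) * (1-Q) / (1 - Q^(i+1))

noncomputable def βE (Q : ℝ) (n : ℕ) : ℝ :=
  ((1-Q)^n)⁻¹ * ∑ i ∈ range (n+1), (n.choose i : ℝ) * (-1)^i * cc Q i

lemma lemA (a : ℕ → ℝ) (u v : ℝ) (n : ℕ) :
    ∑ l ∈ range (n+1), (n.choose l : ℝ) * u^l * v^(n-l) *
      (∑ i ∈ range (l+1), (l.choose i : ℝ) * a i)
    = ∑ i ∈ range (n+1), (n.choose i : ℝ) * a i * u^i * (u+v)^(n-i) := by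
  have key : ∑ l ∈ range (n+1), ∑ i ∈ range (l+1),
      (n.choose l : ℝ) * u^l * v^(n-l) * ((l.choose i : ℝ) * a i)
      = ∑ i ∈ range (n+1), ∑ l ∈ Ico i (n+1),
      (n.choose l : ℝ) * u^l * v^(n-l) * ((l.choose i : ℝ) * a i) := by
    refine Finset.sum_comm' ?_
    intro l i
    simp only [mem_range, mem_Ico]
    omega
  calc ∑ l ∈ range (n+1), (n.choose l : ℝ) * u^l * v^(n-l) *
      (∑ i ∈ range (l+1), (l.choose i : ℝ) * a i)
      = ∑ l ∈ range (n+1), ∑ i ∈ range (l+1),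
        (n.choose l : ℝ) * u^l * v^(n-l) * ((l.choose i : ℝ) * a i) := by
        refine Finset.sum_congr rfl fun l _ => ?_
        rw [Finset.mul_sum]
    _ = ∑ i ∈ range (n+1), ∑ l ∈ Ico i (n+1),
        (n.choose l : ℝ) * u^l * v^(n-l) * ((l.choose i : ℝ) * a i) := key
    _ = ∑ i ∈ range (n+1), (n.choose i : ℝ) * a i * u^i * (u+v)^(n-i) := by
        refine Finset.sum_congr rfl fun i hi => ?_
        rw [mem_range] at hi
        have hin : i ≤ n := by omega
        rw [Finset.sum_Ico_eq_sum_range]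
        have hni : n + 1 - i = (n - i) + 1 := by omega
        rw [hni]
        have : ∀ k ∈ range ((n-i)+1),
            ((n.choose (i+k) : ℝ)) * u^(i+k) * v^(n-(i+k)) * (((i+k).choose i : ℝ) * a i)
            = ((n.choose i : ℝ) * a i * u^i) * (((n-i).choose k : ℝ) * u^k * v^((n-i)-k)) := by
          intro k hk
          rw [mem_range] at hk
          have hkn : i + k ≤ n := by omega
          have hcc : (n.choose (i+k)) * ((i+k).choose i) = n.choose i * (n-i).choose k := by
            have := Nat.choose_mul (n := n) (Nat.le_add_right i k)
            simpa using this
          have hcc' : ((n.choose (i+k)) : ℝ) * (((i+k).choose i) : ℝ)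
              = (n.choose i : ℝ) * ((n-i).choose k : ℝ) := by exact_mod_cast congrArg Nat.cast hcc
          have hv : n - (i+k) = (n-i) - k := by omega
          rw [hv, pow_add]
          linear_combination (u^i * u^k * v^((n-i)-k) * a i) * hcc'
        rw [Finset.sum_congr rfl this, ← Finset.mul_sum]
        congr 1
        rw [add_pow]
        refine Finset.sum_congr rfl fun k hk => ?_
        ring

lemma altsum (n : ℕ) (hn : 2 ≤ n) :
    ∑ i ∈ range (n+1), (n.choose i : ℝ) * (-1)^i * ((i:ℝ)+1) = 0 := by
  obtain ⟨m, rfl⟩ : ∃ m, n = m + 1 := ⟨n-1, by omega⟩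
  have hm : 1 ≤ m := by omega
  have h1 : ∑ i ∈ range (m+1+1), ((-1:ℝ))^i * ((m+1).choose i : ℝ) = 0 := by
    have := Int.alternating_sum_range_choose_of_ne (n := m+1) (by omega)
    exact_mod_cast congrArg (fun z : ℤ => (z : ℝ)) this
  have h2 : ∑ i ∈ range (m+1+1), ((m+1).choose i : ℝ) * (-1)^i * (i:ℝ) = 0 := by
    rw [Finset.sum_range_succ']
    simp only [Nat.cast_zero, mul_zero, add_zero, Nat.cast_add, Nat.cast_one]
    have hterm : ∀ i ∈ range (m+1), ((m+1).choose (i+1) : ℝ) * (-1)^(i+1) * ((i:ℝ)+1)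
        = -((m:ℝ)+1) * ((-1)^i * (m.choose i : ℝ)) := by
      intro i hi
      have hsucc := Nat.add_one_mul_choose_eq m i
      have hc : ((m:ℝ)+1) * (m.choose i : ℝ) = ((m+1).choose (i+1) : ℝ) * ((i:ℝ)+1) := by
        exact_mod_cast congrArg (fun z : ℕ => (z : ℝ)) hsucc
      linear_combination ((-1:ℝ)^i) * hc
    rw [Finset.sum_congr rfl hterm, ← Finset.mul_sum]
    have h3 : ∑ i ∈ range (m+1), ((-1:ℝ))^i * (m.choose i : ℝ) = 0 := by
      have := Int.alternating_sum_range_choose_of_ne (n := m) (by omega)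
      exact_mod_cast congrArg (fun z : ℤ => (z : ℝ)) this
    rw [h3, mul_zero]
  calc ∑ i ∈ range (m+1+1), ((m+1).choose i : ℝ) * (-1)^i * ((i:ℝ)+1)
      = (∑ i ∈ range (m+1+1), ((m+1).choose i : ℝ) * (-1)^i * (i:ℝ))
        + ∑ i ∈ range (m+1+1), ((-1:ℝ))^i * ((m+1).choose i : ℝ) := by
        rw [← Finset.sum_add_distrib]; exact Finset.sum_congr rfl fun i _ => by ring
    _ = 0 := by rw [h1, h2, add_zero]

lemma pow_ne_one_of_s5 (Q : ℝ) (hQ0 : 0 < Q) (hQ1 : Q ≠ 1) (m : ℕ) (hm : m ≠ 0) :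
    Q ^ m ≠ 1 := by
  rcases lt_or_gt_of_ne hQ1 with h | h
  · exact ne_of_lt (pow_lt_one₀ hQ0.le h hm)
  · exact ne_of_gt (one_lt_pow₀ h hm)

lemma βE_zero (Q : ℝ) (hQ1 : Q ≠ 1) : βE Q 0 = 1 := by
  have h0 : (1:ℝ) - Q ≠ 0 := sub_ne_zero.2 (Ne.symm hQ1)
  simp [βE, cc, div_self h0]

/-- The key sum computation. -/
lemma βE_sum (Q : ℝ) (hQ1 : Q ≠ 1) (n : ℕ) :
    ∑ l ∈ range (n+1), (n.choose l : ℝ) * Q ^ l * βE Q l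
      = ((1-Q)^n)⁻¹ * ∑ i ∈ range (n+1), (n.choose i : ℝ) * (-1)^i * cc Q i * Q^i := by
  have h0 : (1:ℝ) - Q ≠ 0 := sub_ne_zero.2 (Ne.symm hQ1)
  have step1 : ∑ l ∈ range (n+1), (n.choose l : ℝ) * Q ^ l * βE Q l
      = ∑ l ∈ range (n+1), (n.choose l : ℝ) * (Q * (1-Q)⁻¹)^l * (1:ℝ)^(n-l) *
        (∑ i ∈ range (l+1), (l.choose i : ℝ) * ((-1)^i * cc Q i)) := by
    refine Finset.sum_congr rfl fun l _ => ?_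
    rw [βE, mul_pow, inv_pow, one_pow]
    rw [Finset.mul_sum, Finset.mul_sum]
    rw [Finset.mul_sum]
    refine Finset.sum_congr rfl fun i _ => ?_
    ring
  rw [step1, lemA]
  have huv : Q * (1-Q)⁻¹ + 1 = (1-Q)⁻¹ := by field_simp; ring
  rw [huv, Finset.mul_sum]
  refine Finset.sum_congr rfl fun i hi => ?_
  rw [mem_range] at hi
  have hin : i ≤ n := by omega
  have : (Q * (1-Q)⁻¹)^i * ((1-Q)⁻¹)^(n-i) = Q^i * ((1-Q)^n)⁻¹ := by
    rw [mul_pow, mul_assoc, ← pow_add, Nat.add_sub_cancel' hin, inv_pow]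
  calc (n.choose i : ℝ) * ((-1)^i * cc Q i) * (Q * (1-Q)⁻¹)^i * ((1-Q)⁻¹)^(n-i)
      = (n.choose i : ℝ) * ((-1)^i * cc Q i) * ((Q * (1-Q)⁻¹)^i * ((1-Q)⁻¹)^(n-i)) := by ring
    _ = ((1-Q)^n)⁻¹ * ((n.choose i : ℝ) * (-1)^i * cc Q i * Q^i) := by rw [this]; ring

lemma βE_rec (Q : ℝ) (hQ0 : 0 < Q) (hQ1 : Q ≠ 1) : CarlitzRec Q (βE Q) := by
  have h0 : (1:ℝ) - Q ≠ 0 := sub_ne_zero.2 (Ne.symm hQ1)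
  refine ⟨βE_zero Q hQ1, fun n hn => ?_⟩
  rw [βE_sum Q hQ1 n, βE]
  rw [← mul_assoc, mul_comm Q, mul_assoc, ← mul_sub, Finset.mul_sum, ← Finset.sum_sub_distrib]
  have hterm : ∀ i ∈ range (n+1),
      (Q * ((n.choose i : ℝ) * (-1)^i * cc Q i * Q^i) - (n.choose i : ℝ) * (-1)^i * cc Q i)
      = -(1-Q) * ((n.choose i : ℝ) * (-1)^i * ((i:ℝ)+1)) := by
    intro i hi
    have hd : (1:ℝ) - Q^(i+1) ≠ 0 :=
      sub_ne_zero.2 (Ne.symm (pow_ne_one_of_s5 Q hQ0 hQ1 (i+1) (by omega)))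
    have hcc : cc Q i * (1 - Q^(i+1)) = ((i:ℝ)+1) * (1-Q) := by
      rw [cc, div_mul_cancel₀ _ hd]
    calc Q * ((n.choose i : ℝ) * (-1)^i * cc Q i * Q^i) - (n.choose i : ℝ) * (-1)^i * cc Q i
        = -((n.choose i : ℝ) * (-1)^i) * (cc Q i * (1 - Q^(i+1))) := by rw [pow_succ]; ring
      _ = -(1-Q) * ((n.choose i : ℝ) * (-1)^i * ((i:ℝ)+1)) := by rw [hcc]; ring
  rw [Finset.sum_congr rfl hterm, ← Finset.mul_sum]
  rcases eq_or_lt_of_le hn with h1 | h2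
  · subst h1
    rw [if_pos rfl]
    simp only [Finset.sum_range_succ, Finset.sum_range_one]
    norm_num
    field_simp
  · rw [altsum n h2, if_neg (by omega)]
    ring

lemma uniq (Q : ℝ) (hQ0 : 0 < Q) (hQ1 : Q ≠ 1) (β : ℕ → ℝ) (hβ : CarlitzRec Q β) :
    ∀ n, β n = βE Q n := by
  intro n
  induction n using Nat.strong_induction_on with
  | _ n ih =>
    match n with
    | 0 => rw [hβ.1, βE_zero Q hQ1]
    | (m+1) =>
      have e1 := hβ.2 (m+1) (by omega)
      have e2 := (βE_rec Q hQ0 hQ1).2 (m+1) (by omega)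
      rw [Finset.sum_range_succ] at e1 e2
      simp only [Nat.choose_self, Nat.cast_one] at e1 e2
      have hS : ∑ l ∈ Finset.range (m+1), ((m+1).choose l : ℝ) * Q^l * β l
          = ∑ l ∈ Finset.range (m+1), ((m+1).choose l : ℝ) * Q^l * βE Q l :=
        Finset.sum_congr rfl fun l hl => by
          rw [ih l (Finset.mem_range.mp hl)]
      rw [hS] at e1
      have hz : (Q * Q^(m+1) - 1) * (β (m+1) - βE Q (m+1)) = 0 := by
        linear_combination e1 - e2
      have hne : Q * Q^(m+1) - 1 ≠ 0 := by
        refine sub_ne_zero.2 ?_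
        rw [← pow_succ']
        exact pow_ne_one_of_s5 Q hQ0 hQ1 (m+2) (by omega)
      rcases mul_eq_zero.mp hz with h | h
      · exact absurd h hne
      · linarith [sub_eq_zero.mp h]

lemma polyE (Q : ℝ) (hQ0 : 0 < Q) (hQ1 : Q ≠ 1) (n : ℕ) (x : ℝ) :
    carlitzPoly Q (βE Q) n x
      = ((1-Q)^n)⁻¹ * ∑ i ∈ range (n+1),
          (n.choose i : ℝ) * (-1)^i * cc Q i * (Q ^ x)^i := by
  have h0 : (1:ℝ) - Q ≠ 0 := sub_ne_zero.2 (Ne.symm hQ1)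
  set u := Q ^ x with hu
  have hstep : ∀ l ∈ range (n+1),
      (n.choose l : ℝ) * qnum Q x ^ (n-l) * Q ^ ((l:ℝ)*x) * βE Q l
      = ((1-Q)^n)⁻¹ * ((n.choose l:ℝ) * u^l * (1-u)^(n-l) *
          (∑ i ∈ range (l+1), (l.choose i : ℝ) * ((-1)^i * cc Q i))) := by
    intro l hl
    rw [mem_range] at hl
    have hll : l ≤ n := by omega
    have hrp : Q ^ ((l:ℝ)*x) = u^l := by
      rw [mul_comm, Real.rpow_mul hQ0.le, Real.rpow_natCast]
    have hinner : ∑ i ∈ range (l+1), (l.choose i : ℝ) * (-1)^i * cc Q i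
        = ∑ i ∈ range (l+1), (l.choose i : ℝ) * ((-1)^i * cc Q i) :=
      Finset.sum_congr rfl fun i _ => by ring
    rw [hrp, qnum, βE, hinner, div_pow, div_eq_mul_inv]
    have hpow : ((1-Q)^(n-l))⁻¹ * ((1-Q)^l)⁻¹ = ((1-Q)^n)⁻¹ := by
      rw [← mul_inv, ← pow_add]
      congr 2
      omega
    set S := ∑ i ∈ range (l+1), (l.choose i : ℝ) * ((-1)^i * cc Q i)
    linear_combination ((n.choose l : ℝ) * (1-u)^(n-l) * u^l * S) * hpow
  rw [carlitzPoly, Finset.sum_congr rfl hstep, ← Finset.mul_sum, lemA]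
  congr 1
  refine Finset.sum_congr rfl fun i _ => ?_
  rw [show u + (1-u) = 1 by ring, one_pow]
  ring

lemma prefac (a b : ℝ) (ha : a ≠ 0) (hb : b ≠ 0) (n : ℕ) :
    (a/b)^((n:ℤ)-1) * ((a^n)⁻¹ * a) = b^((1:ℤ)-(n:ℤ)) := by
  have h1 : (a/b)^((n:ℤ)-1) = a^((n:ℤ)-1) * (b^((n:ℤ)-1))⁻¹ := by
    rw [div_zpow, div_eq_mul_inv]
  have hinv : (a^n)⁻¹ = a^(-(n:ℤ)) := by rw [← zpow_natCast a n, ← zpow_neg]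
  have hx : a^(-(n:ℤ)) * a = a^((1:ℤ)-(n:ℤ)) := by
    rw [sub_eq_add_neg, zpow_add₀ ha, zpow_one, mul_comm]
  have h2 : a^((n:ℤ)-1) * ((a^n)⁻¹ * a) = 1 := by
    rw [hinv, hx, ← zpow_add₀ ha]
    norm_num
  have h3 : (b^((n:ℤ)-1))⁻¹ = b^((1:ℤ)-(n:ℤ)) := by
    rw [← zpow_neg]
    congr 1
    ring
  calc (a/b)^((n:ℤ)-1) * ((a^n)⁻¹ * a)
      = (a^((n:ℤ)-1) * ((a^n)⁻¹ * a)) * (b^((n:ℤ)-1))⁻¹ := by rw [h1]; ring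
    _ = b^((1:ℤ)-(n:ℤ)) := by rw [h2, one_mul, h3]

lemma side (q : ℝ) (hq : 0 < q) (hq1 : q ≠ 1) (w w' : ℕ) (hw : 0 < w) (hw' : 0 < w')
    (n : ℕ) (x : ℝ) :
    qnum q w ^ ((n:ℤ)-1) *
        ∑ j ∈ range w, q^(w'*j) * carlitzPoly (q^w) (βE (q^w)) n
          ((w':ℝ)*x + ((w':ℝ)/w)*j)
    = ∑ i ∈ range (n+1), (n.choose i:ℝ) * (-1)^i * ((i:ℝ)+1) *
        (q ^ ((w:ℝ)*(w':ℝ)*x))^i *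
        ((1-q)^((1:ℤ)-(n:ℤ)) * (1 - q^(w*w'*(i+1))) /
          ((1 - q^(w*(i+1))) * (1 - q^(w'*(i+1))))) := by
  have hQ0 : (0:ℝ) < q^w := pow_pos hq w
  have hQ1 : (q:ℝ)^w ≠ 1 := pow_ne_one_of_s5 q hq hq1 w hw.ne'
  have hdw : (1:ℝ) - q^w ≠ 0 := sub_ne_zero.2 (Ne.symm hQ1)
  have hdq : (1:ℝ) - q ≠ 0 := sub_ne_zero.2 (Ne.symm hq1)
  have hw0 : (w:ℝ) ≠ 0 := Nat.cast_ne_zero.2 hw.ne'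
  set A : ℝ := q ^ ((w:ℝ)*(w':ℝ)*x) with hAdef
  have hA : ∀ j ∈ range w,
      q^(w'*j) * carlitzPoly (q^w) (βE (q^w)) n ((w':ℝ)*x + ((w':ℝ)/w)*j)
      = ((1-q^w)^n)⁻¹ * ∑ i ∈ range (n+1),
          (n.choose i:ℝ) * (-1)^i * cc (q^w) i * A^i * ((q:ℝ)^(w'*(i+1)))^j := by
    intro j _
    rw [polyE (q^w) hQ0 hQ1]
    have hbase : ((q:ℝ)^w) ^ ((w':ℝ)*x + ((w':ℝ)/w)*j) = A * q^(w'*j) := by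
      rw [show ((q:ℝ)^w : ℝ) = q^((w:ℝ)) from (Real.rpow_natCast q w).symm,
        ← Real.rpow_mul hq.le]
      have hexp : (w:ℝ)*((w':ℝ)*x + ((w':ℝ)/w)*j) = (w:ℝ)*(w':ℝ)*x + ((w'*j : ℕ):ℝ) := by
        push_cast
        field_simp
      rw [hexp, Real.rpow_add hq, Real.rpow_natCast]
    rw [hbase, mul_left_comm]
    congr 1
    rw [Finset.mul_sum]
    refine Finset.sum_congr rfl fun i _ => ?_
    have hp : (q:ℝ)^(w'*j) * ((q:ℝ)^(w'*j))^i = ((q:ℝ)^(w'*(i+1)))^j := by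
      rw [← pow_mul, ← pow_mul, ← pow_add]
      congr 1
      ring
    rw [mul_pow]
    linear_combination ((n.choose i:ℝ)*(-1)^i*cc (q^w) i * A^i) * hp
  rw [Finset.sum_congr rfl hA, ← Finset.mul_sum, Finset.sum_comm, ← mul_assoc]
  rw [Finset.mul_sum]
  refine Finset.sum_congr rfl fun i _ => ?_
  have hr1 : (q:ℝ)^(w'*(i+1)) ≠ 1 := pow_ne_one_of_s5 q hq hq1 _ (by positivity)
  have hd1 : (1:ℝ) - q^(w*(i+1)) ≠ 0 :=
    sub_ne_zero.2 (Ne.symm (pow_ne_one_of_s5 q hq hq1 _ (by positivity)))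
  have hd2 : (1:ℝ) - q^(w'*(i+1)) ≠ 0 := sub_ne_zero.2 (Ne.symm hr1)
  have hgeom : ∑ j ∈ range w, (n.choose i:ℝ) * (-1)^i * cc (q^w) i * A^i * ((q:ℝ)^(w'*(i+1)))^j
      = (n.choose i:ℝ) * (-1)^i * cc (q^w) i * A^i *
        ((q^(w*w'*(i+1)) - 1) / (q^(w'*(i+1)) - 1)) := by
    rw [← Finset.mul_sum, geom_sum_eq hr1, ← pow_mul]
    congr 3
    ring
  rw [hgeom, cc, qnum]
  rw [show ((q:ℝ)^w)^(i+1) = q^(w*(i+1)) from (pow_mul q w (i+1)).symm]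
  rw [show ((q:ℝ)^w : ℝ) = q ^ ((w:ℕ):ℝ) from (Real.rpow_natCast q w).symm]
  have hpre := prefac (1 - q^((w:ℕ):ℝ)) (1-q) (by rwa [Real.rpow_natCast]) hdq n
  have hd2' : (q:ℝ)^(w'*(i+1)) - 1 ≠ 0 := sub_ne_zero.2 hr1
  rw [← hpre]
  field_simp
  ring

theorem carlitz_symmetric (q : ℝ) (hq : 0 < q) (hq1 : q ≠ 1)
    (w₁ w₂ : ℕ) (hw₁ : 0 < w₁) (hw₂ : 0 < w₂)
    (β₁ β₂ : ℕ → ℝ) (h1 : CarlitzRec (q ^ w₁) β₁) (h2 : CarlitzRec (q ^ w₂) β₂) :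
    ∀ (n : ℕ) (x : ℝ),
      qnum q w₁ ^ ((n : ℤ) - 1) *
          ∑ j ∈ Finset.range w₁,
            q ^ (w₂ * j) * carlitzPoly (q ^ w₁) β₁ n ((w₂ : ℝ) * x + ((w₂ : ℝ) / w₁) * j) =
        qnum q w₂ ^ ((n : ℤ) - 1) *
          ∑ j ∈ Finset.range w₂,
            q ^ (w₁ * j) * carlitzPoly (q ^ w₂) β₂ n ((w₁ : ℝ) * x + ((w₁ : ℝ) / w₂) * j) := by
  intro n x
  have hQ1a : (q:ℝ)^w₁ ≠ 1 := pow_ne_one_of_s5 q hq hq1 w₁ hw₁.ne'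
  have hQ1b : (q:ℝ)^w₂ ≠ 1 := pow_ne_one_of_s5 q hq hq1 w₂ hw₂.ne'
  have hb1 : β₁ = βE (q^w₁) := funext (uniq (q^w₁) (pow_pos hq w₁) hQ1a β₁ h1)
  have hb2 : β₂ = βE (q^w₂) := funext (uniq (q^w₂) (pow_pos hq w₂) hQ1b β₂ h2)
  rw [hb1, hb2, side q hq hq1 w₁ w₂ hw₁ hw₂ n x, side q hq hq1 w₂ w₁ hw₂ hw₁ n x]
  refine Finset.sum_congr rfl fun i _ => ?_
  rw [show (w₁:ℝ)*(w₂:ℝ)*x = (w₂:ℝ)*(w₁:ℝ)*x from by ring,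
    show w₁*w₂*(i+1) = w₂*w₁*(i+1) from by ring,
    show ((1:ℝ) - q^(w₁*(i+1))) * (1 - q^(w₂*(i+1)))
      = (1 - q^(w₂*(i+1))) * (1 - q^(w₁*(i+1))) from mul_comm _ _]
end

section
/- For every n ≥ 0, every positive integer w, and every rational (or real) x, the classical Bernoulli polynomial satisfies the multiplication formula B_n(wx) = w^{n−1} · Σ_{j=0}^{w−1} B_n(x + j/w). -/
open Polynomial Finset

private noncomputable def gB (w n : ℕ) : Polynomial ℚ :=
  (Polynomial.bernoulli n).comp (Polynomial.C (w : ℚ) * Polynomial.X) -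
    Polynomial.C ((w : ℚ) ^ ((n : ℤ) - 1)) *
      ∑ j ∈ Finset.range w, (Polynomial.bernoulli n).comp
        (Polynomial.X + Polynomial.C ((j : ℚ) / w))

private lemma gB_eval (w n : ℕ) (x : ℚ) :
    (gB w n).eval x = (Polynomial.bernoulli n).eval ((w : ℚ) * x) -
      (w : ℚ) ^ ((n : ℤ) - 1) *
        ∑ j ∈ Finset.range w, (Polynomial.bernoulli n).eval (x + (j : ℚ) / w) := by
  simp [gB, eval_finset_sum, eval_comp]

private lemma gB_periodic (w n : ℕ) (hw : 0 < w) (x : ℚ) :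
    (gB w n).eval (x + 1 / w) = (gB w n).eval x := by
  have hw0 : (w : ℚ) ≠ 0 := by positivity
  rw [gB_eval, gB_eval]
  have h1 : (w : ℚ) * (x + 1 / w) = 1 + w * x := by field_simp; ring
  have h2 : ∀ j : ℕ, x + 1 / w + (j : ℚ) / w = x + ((j + 1 : ℕ) : ℚ) / w := by
    intro j; push_cast; field_simp; ring
  have h3 : ∑ j ∈ Finset.range w, (Polynomial.bernoulli n).eval (x + 1 / w + (j : ℚ) / w)
      = ∑ j ∈ Finset.range w, (Polynomial.bernoulli n).eval (x + ((j : ℚ) + 1) / w) := by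
    refine Finset.sum_congr rfl fun j _ => ?_
    rw [h2 j]; push_cast; ring_nf
  have h4 : (∑ j ∈ Finset.range w, (Polynomial.bernoulli n).eval (x + ((j : ℚ) + 1) / w))
      = (∑ j ∈ Finset.range w, (Polynomial.bernoulli n).eval (x + (j : ℚ) / w))
        + (Polynomial.bernoulli n).eval (x + (w : ℚ) / w)
        - (Polynomial.bernoulli n).eval (x + (0 : ℚ) / w) := by
    have := Finset.sum_range_succ' (fun j : ℕ =>
      (Polynomial.bernoulli n).eval (x + (j : ℚ) / w)) w
    rw [Finset.sum_range_succ] at this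
    push_cast at this ⊢
    linarith [this]
  have h5 : x + (w : ℚ) / w = 1 + x := by field_simp; ring
  have h6 : x + (0 : ℚ) / w = x := by simp
  rw [h1, h3, h4, h5, h6, Polynomial.bernoulli_eval_one_add,
    Polynomial.bernoulli_eval_one_add]
  have key : (n : ℚ) * ((w : ℚ) * x) ^ (n - 1)
      = (w : ℚ) ^ ((n : ℤ) - 1) * ((n : ℚ) * x ^ (n - 1)) := by
    cases n with
    | zero => simp
    | succ m =>
        have : ((m + 1 : ℕ) : ℤ) - 1 = (m : ℤ) := by push_cast; ring
        rw [this, zpow_natCast]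
        simp [mul_pow]; ring
  rw [key]; ring

private lemma gB_const (w n : ℕ) (hw : 0 < w) :
    gB w n = Polynomial.C ((gB w n).eval 0) := by
  have hw0 : (w : ℚ) ≠ 0 := by positivity
  set c := (gB w n).eval 0 with hc
  have hroot : ∀ k : ℕ, (gB w n - Polynomial.C c).IsRoot ((k : ℚ) / w) := by
    intro k
    induction k with
    | zero => simp [Polynomial.IsRoot, hc]
    | succ k ih =>
        have h : ((k + 1 : ℕ) : ℚ) / w = (k : ℚ) / w + 1 / w := by
          push_cast; field_simp
        simp only [Polynomial.IsRoot, Polynomial.eval_sub, Polynomial.eval_C] at ih ⊢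
        rw [h, gB_periodic w n hw]
        exact ih
  have hinf : Set.Infinite {x : ℚ | (gB w n - Polynomial.C c).IsRoot x} := by
    refine Set.infinite_of_injective_forall_mem (f := fun k : ℕ => (k : ℚ) / w) ?_ ?_
    · intro a b hab
      field_simp at hab
      exact_mod_cast hab
    · intro k; exact hroot k
  have h0 := Polynomial.eq_zero_of_infinite_isRoot _ hinf
  exact sub_eq_zero.mp h0

private lemma gB_deriv (w n : ℕ) (hw : 0 < w) :
    Polynomial.derivative (gB w (n + 1))
      = Polynomial.C ((w : ℚ) * (n + 1)) * gB w n := by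
  have hw0 : (w : ℚ) ≠ 0 := by positivity
  have hpow : (w : ℚ) ^ (((n + 1 : ℕ) : ℤ) - 1) = (w : ℚ) * (w : ℚ) ^ ((n : ℤ) - 1) := by
    have h1 : ((n + 1 : ℕ) : ℤ) - 1 = 1 + ((n : ℤ) - 1) := by push_cast; ring
    rw [h1, zpow_add₀ hw0, zpow_one]
  have hcomp : ∀ q : Polynomial ℚ,
      (Polynomial.derivative (Polynomial.bernoulli (n + 1))).comp q
        = Polynomial.C ((n : ℚ) + 1) * (Polynomial.bernoulli n).comp q := by
    intro q
    rw [Polynomial.derivative_bernoulli_add_one, Polynomial.mul_comp,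
      Polynomial.add_comp, Polynomial.natCast_comp, Polynomial.one_comp]
    congr 1
    simp [Polynomial.C_add, Polynomial.C_1, map_natCast]
  rw [gB, gB, derivative_sub, derivative_mul, derivative_C, zero_mul, zero_add,
    derivative_sum]
  simp only [Polynomial.derivative_comp, hcomp, derivative_mul, derivative_C,
    derivative_X, derivative_add, zero_mul, zero_add, mul_one, add_zero, one_mul]
  rw [hpow, ← Finset.mul_sum]
  set S := ∑ j ∈ Finset.range w, (Polynomial.bernoulli n).comp
    (Polynomial.X + Polynomial.C ((j : ℚ) / w)) with hS
  set A := (Polynomial.bernoulli n).comp (Polynomial.C (w : ℚ) * Polynomial.X) with hA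
  simp only [Polynomial.C_mul, Polynomial.C_add, Polynomial.C_1, map_natCast]

  ring

private lemma gB_eq_zero (w n : ℕ) (hw : 0 < w) : gB w n = 0 := by
  have h1 := gB_const w n hw
  have h2 := gB_const w (n + 1) hw
  have h3 := gB_deriv w n hw
  rw [h2, Polynomial.derivative_C] at h3
  have h4 : Polynomial.C ((w : ℚ) * (n + 1)) * gB w n = 0 := h3.symm
  rw [h1, ← Polynomial.C_mul] at h4
  have h5 : (w : ℚ) * (n + 1) * (gB w n).eval 0 = 0 := Polynomial.C_eq_zero.mp h4
  have hw0 : (w : ℚ) * (n + 1) ≠ 0 := by positivity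
  have : (gB w n).eval 0 = 0 := by
    rcases mul_eq_zero.mp h5 with h | h
    · exact absurd h hw0
    · exact h
  rw [h1, this, Polynomial.C_0]

theorem bernoulli_multiplication (n : ℕ) (w : ℕ) (hw : 0 < w) (x : ℚ) :
    (Polynomial.bernoulli n).eval ((w : ℚ) * x) =
      (w : ℚ) ^ ((n : ℤ) - 1) *
        ∑ j ∈ Finset.range w, (Polynomial.bernoulli n).eval (x + (j : ℚ) / w) := by
  have h := gB_eq_zero w n hw
  have := gB_eval w n x
  rw [h] at this
  simp only [Polynomial.eval_zero] at this
  linarith [this]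
end

section
/- For every n ≥ 0, all positive integers w₁, w₂, and every rational (or real) x, the classical Bernoulli polynomial satisfies the symmetric identity w₁^{n−1} · Σ_{j=0}^{w₁−1} B_n(w₂x + (w₂/w₁)j) = w₂^{n−1} · Σ_{j=0}^{w₂−1} B_n(w₁x + (w₁/w₂)j). -/
open Polynomial Finset intervalIntegral

section Aux

lemma bern_comp_add_one (n : ℕ) :
    (Polynomial.bernoulli n).comp (X + 1) =
      Polynomial.bernoulli n + (n : ℚ[X]) * X ^ (n - 1) := by
  apply Polynomial.funext
  intro x
  simp only [eval_comp, eval_add, eval_X, eval_one, eval_mul, eval_pow, eval_natCast]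
  rw [add_comm x 1, Polynomial.bernoulli_eval_one_add]

lemma bernoulliFun_add_one' (n : ℕ) (x : ℝ) :
    bernoulliFun n (x + 1) = bernoulliFun n x + n * x ^ (n - 1) := by
  have h := congrArg (fun p => (p.map (algebraMap ℚ ℝ)).eval x) (bern_comp_add_one n)
  simpa [bernoulliFun, Polynomial.map_comp, eval_comp] using h

lemma bernoulliFun_add_nat (n m : ℕ) (x : ℝ) :
    bernoulliFun n (x + m) =
      bernoulliFun n x + n * ∑ i ∈ Finset.range m, (x + i) ^ (n - 1) := by
  induction m with
  | zero => simp
  | succ m ih =>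
    have : x + (m + 1 : ℕ) = (x + m) + 1 := by push_cast; ring
    rw [this, bernoulliFun_add_one', ih, Finset.sum_range_succ]
    ring

lemma npow_pred_key (n : ℕ) (w : ℝ) (hw : w ≠ 0) :
    (n : ℝ) * w ^ (n - 1 : ℕ) = n * w ^ ((n : ℤ) - 1) := by
  cases n with
  | zero => simp
  | succ k =>
    have : ((k + 1 : ℕ) : ℤ) - 1 = (k : ℤ) := by push_cast; ring
    rw [this, zpow_natCast]
    simp

/-- the function appearing in the theorem -/
noncomputable def Ffun (n w₁ w₂ : ℕ) (x : ℝ) : ℝ :=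
  (w₁ : ℝ) ^ ((n : ℤ) - 1) *
    ∑ j ∈ Finset.range w₁, bernoulliFun n ((w₂ : ℝ) * x + ((w₂ : ℝ) / w₁) * j)

lemma F_step (n w₁ w₂ : ℕ) (hw₁ : 0 < w₁) (hw₂ : 0 < w₂) (x : ℝ) :
    Ffun n w₁ w₂ (x + 1) - Ffun n w₁ w₂ x =
      (n : ℝ) * ((w₁ : ℝ) ^ ((n : ℤ) - 1) * (w₂ : ℝ) ^ ((n : ℤ) - 1)) *
        ∑ j ∈ Finset.range w₁, ∑ i ∈ Finset.range w₂,
          (x + (j : ℝ) / w₁ + (i : ℝ) / w₂) ^ (n - 1) := by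
  have hw₁' : (w₁ : ℝ) ≠ 0 := Nat.cast_ne_zero.2 hw₁.ne'
  have hw₂' : (w₂ : ℝ) ≠ 0 := Nat.cast_ne_zero.2 hw₂.ne'
  have hb : ∀ j : ℕ, (w₂ : ℝ) * (x + 1) + ((w₂ : ℝ) / w₁) * j =
      ((w₂ : ℝ) * x + ((w₂ : ℝ) / w₁) * j) + (w₂ : ℕ) := by
    intro j; push_cast; ring
  have expand : ∀ j i : ℕ, ((w₂ : ℝ) * x + ((w₂ : ℝ) / w₁) * j + (i : ℝ)) ^ (n - 1) =
      (w₂ : ℝ) ^ (n - 1 : ℕ) * (x + (j : ℝ) / w₁ + (i : ℝ) / w₂) ^ (n - 1) := by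
    intro j i
    rw [← mul_pow]
    congr 1
    field_simp
  simp only [Ffun, hb, bernoulliFun_add_nat, expand]
  rw [Finset.sum_add_distrib, mul_add, add_sub_cancel_left, Finset.mul_sum, Finset.mul_sum]
  refine Finset.sum_congr rfl fun j _ => ?_
  rw [Finset.mul_sum, Finset.mul_sum, Finset.mul_sum]
  refine Finset.sum_congr rfl fun i _ => ?_
  have key := npow_pred_key n w₂ hw₂'
  set s := (x + (j : ℝ) / w₁ + (i : ℝ) / w₂) ^ (n - 1)
  linear_combination ((w₁ : ℝ) ^ ((n : ℤ) - 1) * s) * key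

lemma step_symm (n w₁ w₂ : ℕ) (x : ℝ) :
    (∑ j ∈ Finset.range w₁, ∑ i ∈ Finset.range w₂,
        (x + (j : ℝ) / w₁ + (i : ℝ) / w₂) ^ (n - 1)) =
      ∑ j ∈ Finset.range w₂, ∑ i ∈ Finset.range w₁,
        (x + (j : ℝ) / w₂ + (i : ℝ) / w₁) ^ (n - 1) := by
  rw [Finset.sum_comm]
  exact Finset.sum_congr rfl fun j _ => Finset.sum_congr rfl fun i _ => by ring_nf

end Aux

section Integral

lemma continuous_bernoulliFun_affine (n : ℕ) (a b : ℝ) :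
    Continuous fun x : ℝ => bernoulliFun n (b * x + a) := by
  exact (Polynomial.continuous _).comp ((continuous_const.mul continuous_id).add continuous_const)

lemma integral_bernoulliFun_affine (n : ℕ) (a b : ℝ) (hb : b ≠ 0) :
    (∫ x in (0:ℝ)..1, bernoulliFun n (b * x + a)) =
      (bernoulliFun (n + 1) (a + b) - bernoulliFun (n + 1) a) / ((n + 1) * b) := by
  have hn : ((n : ℝ) + 1) ≠ 0 := by positivity
  have hd : ∀ x ∈ Set.uIcc (0:ℝ) 1,
      HasDerivAt (fun y => bernoulliFun (n + 1) (b * y + a) / ((n + 1) * b))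
        (bernoulliFun n (b * x + a)) x := by
    intro x _
    have haff : HasDerivAt (fun y : ℝ => b * y + a) b x := by
      simpa using ((hasDerivAt_id x).const_mul b).add_const a
    have h1 := (hasDerivAt_bernoulliFun (n + 1) (b * x + a)).comp x haff
    have h2 := h1.div_const (((n : ℝ) + 1) * b)
    refine h2.congr_deriv ?_
    simp only [Nat.add_sub_cancel, Nat.cast_add, Nat.cast_one]
    field_simp
  rw [integral_eq_sub_of_hasDerivAt hd
    (((continuous_bernoulliFun_affine n a b)).intervalIntegrable _ _)]
  rw [mul_one, mul_zero, zero_add, add_comm b a, sub_div]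

lemma integral_Ffun (n w₁ w₂ : ℕ) (hw₁ : 0 < w₁) (hw₂ : 0 < w₂) :
    (∫ x in (0:ℝ)..1, Ffun n w₁ w₂ x) =
      (w₁ : ℝ) ^ ((n : ℤ) - 1) * (w₂ : ℝ) ^ ((n : ℤ) - 1) *
        ∑ j ∈ Finset.range w₁, ∑ i ∈ Finset.range w₂,
          ((j : ℝ) / w₁ + (i : ℝ) / w₂) ^ n := by
  have hw₁' : (w₁ : ℝ) ≠ 0 := Nat.cast_ne_zero.2 hw₁.ne'
  have hw₂' : (w₂ : ℝ) ≠ 0 := Nat.cast_ne_zero.2 hw₂.ne'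
  have hn : ((n : ℝ) + 1) ≠ 0 := by positivity
  have hint : ∀ j ∈ Finset.range w₁, IntervalIntegrable
      (fun x : ℝ => bernoulliFun n ((w₂ : ℝ) * x + (w₂ : ℝ) / w₁ * j))
      MeasureTheory.volume 0 1 :=
    fun j _ => (continuous_bernoulliFun_affine n _ _).intervalIntegrable _ _
  simp only [Ffun]
  rw [intervalIntegral.integral_const_mul, intervalIntegral.integral_finset_sum hint]
  simp only [Finset.mul_sum]
  refine Finset.sum_congr rfl fun j _ => ?_
  rw [integral_bernoulliFun_affine n _ _ hw₂']
  have key : bernoulliFun (n + 1) ((w₂ : ℝ) / w₁ * j + w₂) -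
      bernoulliFun (n + 1) ((w₂ : ℝ) / w₁ * j) =
      ((n : ℝ) + 1) * ∑ i ∈ Finset.range w₂, ((w₂ : ℝ) / w₁ * j + i) ^ n := by
    have h := bernoulliFun_add_nat (n + 1) w₂ ((w₂ : ℝ) / w₁ * j)
    rw [h]
    push_cast
    ring_nf
  rw [key]
  have hdiv : ((n : ℝ) + 1) / (((n : ℝ) + 1) * w₂) = (w₂ : ℝ)⁻¹ := by field_simp
  rw [mul_comm ((n : ℝ) + 1) (∑ i ∈ Finset.range w₂, ((w₂ : ℝ) / w₁ * j + i) ^ n),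
    mul_div_assoc, hdiv, Finset.sum_mul, Finset.mul_sum]
  refine Finset.sum_congr rfl fun i _ => ?_
  have hsz : ((w₂ : ℝ) / w₁ * j + i) ^ n = (w₂ : ℝ) ^ n * ((j : ℝ) / w₁ + (i : ℝ) / w₂) ^ n := by
    rw [← mul_pow]
    congr 1
    field_simp
  have hzz : (w₂ : ℝ) ^ (n : ℕ) * (w₂ : ℝ)⁻¹ = (w₂ : ℝ) ^ ((n : ℤ) - 1) := by
    rw [zpow_sub_one₀ hw₂', zpow_natCast]
  rw [hsz]
  linear_combination ((w₁ : ℝ) ^ ((n : ℤ) - 1) * ((j : ℝ) / w₁ + (i : ℝ) / w₂) ^ n) * hzz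

end Integral

section Main

lemma sum_symm_pow (n w₁ w₂ : ℕ) :
    (∑ j ∈ Finset.range w₁, ∑ i ∈ Finset.range w₂, ((j : ℝ) / w₁ + (i : ℝ) / w₂) ^ n) =
      ∑ j ∈ Finset.range w₂, ∑ i ∈ Finset.range w₁, ((j : ℝ) / w₂ + (i : ℝ) / w₁) ^ n := by
  rw [Finset.sum_comm]
  exact Finset.sum_congr rfl fun j _ => Finset.sum_congr rfl fun i _ => by ring_nf

lemma continuous_Ffun (n w₁ w₂ : ℕ) : Continuous (Ffun n w₁ w₂) :=
  continuous_const.mul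
    (continuous_finset_sum _ fun j _ => continuous_bernoulliFun_affine n _ _)

lemma real_symm (n w₁ w₂ : ℕ) (hw₁ : 0 < w₁) (hw₂ : 0 < w₂) (x : ℝ) :
    Ffun n w₁ w₂ x = Ffun n w₂ w₁ x := by
  set B : ℝ[X] := (Polynomial.bernoulli n).map (algebraMap ℚ ℝ) with hB
  set P : ℝ[X] :=
    C ((w₁ : ℝ) ^ ((n : ℤ) - 1)) *
        ∑ j ∈ Finset.range w₁, B.comp (C (w₂ : ℝ) * X + C ((w₂ : ℝ) / w₁ * j)) -
      C ((w₂ : ℝ) ^ ((n : ℤ) - 1)) *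
        ∑ j ∈ Finset.range w₂, B.comp (C (w₁ : ℝ) * X + C ((w₁ : ℝ) / w₂ * j)) with hPdef
  have hP : ∀ y : ℝ, P.eval y = Ffun n w₁ w₂ y - Ffun n w₂ w₁ y := by
    intro y
    simp [hPdef, Ffun, bernoulliFun, eval_comp, eval_finset_sum, hB]
  have hper : ∀ y : ℝ, P.eval (y + 1) = P.eval y := by
    intro y
    have h1 := F_step n w₁ w₂ hw₁ hw₂ y
    have h2 := F_step n w₂ w₁ hw₂ hw₁ y
    have h3 := step_symm n w₁ w₂ y
    have h4 : Ffun n w₁ w₂ (y + 1) - Ffun n w₁ w₂ y =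
        Ffun n w₂ w₁ (y + 1) - Ffun n w₂ w₁ y := by
      rw [h1, h2, h3]; ring
    rw [hP, hP]
    linarith
  have hnat : ∀ k : ℕ, P.eval (k : ℝ) = P.eval 0 := by
    intro k
    induction k with
    | zero => norm_num
    | succ k ih =>
      have hc : ((k + 1 : ℕ) : ℝ) = (k : ℝ) + 1 := by push_cast; ring
      rw [hc, hper, ih]
  have h0 : P - C (P.eval 0) = 0 := by
    apply Polynomial.eq_zero_of_infinite_isRoot
    apply Set.Infinite.mono (s := Set.range ((↑) : ℕ → ℝ))
    · rintro _ ⟨k, rfl⟩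
      simp [Polynomial.IsRoot, hnat k]
    · exact Set.infinite_range_of_injective Nat.cast_injective
  have hPconst : P = C (P.eval 0) := by rwa [sub_eq_zero] at h0
  have e1 : (∫ y in (0:ℝ)..1, P.eval y) = P.eval 0 := by
    conv_lhs => rw [hPconst]
    simp
  have e2 : (∫ y in (0:ℝ)..1, P.eval y) = 0 := by
    have hfeq : (fun y : ℝ => P.eval y) =
        fun y => Ffun n w₁ w₂ y - Ffun n w₂ w₁ y := funext hP
    rw [hfeq, intervalIntegral.integral_sub
        ((continuous_Ffun n w₁ w₂).intervalIntegrable _ _)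
        ((continuous_Ffun n w₂ w₁).intervalIntegrable _ _),
      integral_Ffun n w₁ w₂ hw₁ hw₂, integral_Ffun n w₂ w₁ hw₂ hw₁,
      sum_symm_pow n w₁ w₂]
    ring
  have hc0 : P.eval 0 = 0 := by rw [← e1, e2]
  have := hP x
  rw [hPconst, hc0] at this
  simp at this
  linarith

end Main

lemma heval_cast (n : ℕ) (q : ℚ) :
    (((Polynomial.bernoulli n).eval q : ℚ) : ℝ) = bernoulliFun n (q : ℝ) := by
  rw [bernoulliFun, eval_map, show ((q : ℝ)) = algebraMap ℚ ℝ q from (eq_ratCast _ q).symm,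
    Polynomial.eval₂_at_apply, eq_ratCast]

theorem bernoulli_symmetric (n : ℕ) (w₁ w₂ : ℕ) (hw₁ : 0 < w₁) (hw₂ : 0 < w₂) (x : ℚ) :
    (w₁ : ℚ) ^ ((n : ℤ) - 1) *
        ∑ j ∈ Finset.range w₁,
          (Polynomial.bernoulli n).eval ((w₂ : ℚ) * x + ((w₂ : ℚ) / w₁) * j) =
      (w₂ : ℚ) ^ ((n : ℤ) - 1) *
        ∑ j ∈ Finset.range w₂,
          (Polynomial.bernoulli n).eval ((w₁ : ℚ) * x + ((w₁ : ℚ) / w₂) * j) := by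
  have key := real_symm n w₁ w₂ hw₁ hw₂ (x : ℝ)
  simp only [Ffun] at key
  apply (Rat.cast_injective (α := ℝ))
  push_cast [heval_cast]
  exact key
end

section
/- Let r be a positive integer, let w₁, w₂ be positive integers, and for each rational y let (B_n^{(r)}(y))_{n≥0} be the higher-order Bernoulli polynomial values, i.e. the rationals determined by (Σ_{n≥0} B_n^{(r)}(y) tⁿ/n!)·(exp(t) − 1)^r = t^r·exp(yt) in ℚ[[t]]. Then for every n ≥ 0 and every rational x, w₁^{n−r} · Σ_{j₁,…,j_r=0}^{w₁−1} B_n^{(r)}(w₂x + (w₂/w₁)(j₁+⋯+j_r)) = w₂^{n−r} · Σ_{j₁,…,j_r=0}^{w₂−1} B_n^{(r)}(w₁x + (w₁/w₂)(j₁+⋯+j_r)). -/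
open PowerSeries Finset

private lemma exp_rescale_mk (y : ℚ) :
    rescale y (exp ℚ) = PowerSeries.mk fun n => y ^ n / n.factorial := by
  ext n
  simp [coeff_rescale, coeff_exp, div_eq_mul_inv, Algebra.algebraMap_self_apply]

private lemma rescale_exp_sum {ι : Type*} (s : Finset ι) (f : ι → ℚ) :
    rescale (∑ i ∈ s, f i) (exp ℚ) = ∏ i ∈ s, rescale (f i) (exp ℚ) := by
  classical
  induction s using Finset.induction with
  | empty => simp [rescale_zero, constantCoeff_exp]
  | insert _ _ h ih =>
      rw [Finset.sum_insert h, Finset.prod_insert h, ← ih, exp_mul_exp_eq_exp_add]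

private lemma rescale_exp_pow (a : ℚ) (k : ℕ) :
    rescale a (exp ℚ) ^ k = rescale (k * a) (exp ℚ) := by
  induction k with
  | zero => simp [rescale_zero, constantCoeff_exp]
  | succ k ih =>
      rw [pow_succ, ih, exp_mul_exp_eq_exp_add]
      congr 1; push_cast; ring

private lemma rescale_exp_sub_one_ne_zero (w : ℚ) (hw : w ≠ 0) :
    rescale w (exp ℚ) - 1 ≠ 0 := by
  intro h
  have := congrArg (coeff 1) h
  simp [coeff_exp, Nat.factorial] at this
  exact hw this

theorem higher_bernoulli_symmetric (r : ℕ) (hr : 0 < r)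
    (w₁ w₂ : ℕ) (hw₁ : 0 < w₁) (hw₂ : 0 < w₂) (B : ℚ → ℕ → ℚ)
    (hB : ∀ y : ℚ,
      (PowerSeries.mk fun n => B y n / n.factorial) * (PowerSeries.exp ℚ - 1) ^ r =
        PowerSeries.X ^ r * PowerSeries.mk fun n => y ^ n / n.factorial) :
    ∀ (n : ℕ) (x : ℚ),
      (w₁ : ℚ) ^ ((n : ℤ) - r) *
          ∑ j : Fin r → Fin w₁,
            B ((w₂ : ℚ) * x + ((w₂ : ℚ) / w₁) * ∑ l, ((j l : ℕ) : ℚ)) n =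
        (w₂ : ℚ) ^ ((n : ℤ) - r) *
          ∑ j : Fin r → Fin w₂,
            B ((w₁ : ℚ) * x + ((w₁ : ℚ) / w₂) * ∑ l, ((j l : ℕ) : ℚ)) n := by
  intro n x
  -- key identity, applied symmetrically
  have key : ∀ u v : ℕ, 0 < u →
      rescale (u : ℚ) (∑ j : Fin r → Fin u,
          PowerSeries.mk fun n => B ((v : ℚ) * x + ((v : ℚ) / u) * ∑ l, ((j l : ℕ) : ℚ)) n
            / n.factorial) *
        ((rescale (u : ℚ) (exp ℚ) - 1) ^ r * (rescale (v : ℚ) (exp ℚ) - 1) ^ r) =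
      ((u : ℚ) ^ r) • ((PowerSeries.X : ℚ⟦X⟧) ^ r *
        rescale ((u : ℚ) * v * x) (exp ℚ) *
        (rescale ((u : ℚ) * v) (exp ℚ) - 1) ^ r) := by
    intro u v hu
    have hu' : (u : ℚ) ≠ 0 := Nat.cast_ne_zero.mpr hu.ne'
    -- sum hB over all j
    have h1 : (∑ j : Fin r → Fin u,
          PowerSeries.mk fun n => B ((v : ℚ) * x + ((v : ℚ) / u) * ∑ l, ((j l : ℕ) : ℚ)) n
            / n.factorial) * (exp ℚ - 1) ^ r =
        PowerSeries.X ^ r * ∑ j : Fin r → Fin u,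
          rescale ((v : ℚ) * x + ((v : ℚ) / u) * ∑ l, ((j l : ℕ) : ℚ)) (exp ℚ) := by
      rw [Finset.sum_mul, Finset.mul_sum]
      exact Finset.sum_congr rfl fun j _ => by rw [hB, exp_rescale_mk]
    -- apply rescale u
    have h2 := congrArg (rescale (u : ℚ)) h1
    rw [map_mul, map_pow, map_sub, map_one, map_mul, map_pow, rescale_X] at h2
    simp only [map_sum] at h2
    have h3 : ∀ j : Fin r → Fin u,
        rescale (u : ℚ) (rescale ((v : ℚ) * x + ((v : ℚ) / u) * ∑ l, ((j l : ℕ) : ℚ)) (exp ℚ)) =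
        rescale ((u : ℚ) * v * x) (exp ℚ) * ∏ l, rescale ((v : ℚ) * (j l : ℕ)) (exp ℚ) := by
      intro j
      rw [rescale_rescale, ← rescale_exp_sum, exp_mul_exp_eq_exp_add]
      congr 1
      rw [← Finset.mul_sum]
      field_simp
    simp only [h3] at h2
    rw [← Finset.mul_sum, ← Fintype.sum_pow (fun i : Fin u => rescale ((v : ℚ) * ((i : ℕ) : ℚ)) (exp ℚ)) r] at h2
    rw [← map_sum] at h2
    -- multiply by (rescale v exp - 1)^r
    have h4 := congrArg (· * (rescale (v : ℚ) (exp ℚ) - 1) ^ r) h2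
    have hg : (∑ i : Fin u, rescale ((v : ℚ) * (i : ℕ)) (exp ℚ)) *
        (rescale (v : ℚ) (exp ℚ) - 1) = rescale ((u : ℚ) * v) (exp ℚ) - 1 := by
      have : ∀ i : Fin u, rescale ((v : ℚ) * (i : ℕ)) (exp ℚ)
          = rescale (v : ℚ) (exp ℚ) ^ (i : ℕ) := by
        intro i; rw [rescale_exp_pow, mul_comm]
      simp only [this, Fin.sum_univ_eq_sum_range]
      rw [geom_sum_mul, rescale_exp_pow, mul_comm]
    calc rescale (u : ℚ) (∑ j : Fin r → Fin u,
          PowerSeries.mk fun n => B ((v : ℚ) * x + ((v : ℚ) / u) * ∑ l, ((j l : ℕ) : ℚ)) n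
            / n.factorial) *
        ((rescale (u : ℚ) (exp ℚ) - 1) ^ r * (rescale (v : ℚ) (exp ℚ) - 1) ^ r)
        = rescale (u : ℚ) (∑ j : Fin r → Fin u,
          PowerSeries.mk fun n => B ((v : ℚ) * x + ((v : ℚ) / u) * ∑ l, ((j l : ℕ) : ℚ)) n
            / n.factorial) * (rescale (u : ℚ) (exp ℚ) - 1) ^ r *
            (rescale (v : ℚ) (exp ℚ) - 1) ^ r := by ring
      _ = (C (u : ℚ) * X) ^ r * (rescale ((u : ℚ) * v * x) (exp ℚ) *
            (∑ i : Fin u, rescale ((v : ℚ) * (i : ℕ)) (exp ℚ)) ^ r) *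
            (rescale (v : ℚ) (exp ℚ) - 1) ^ r := by rw [h2]
      _ = (C (u : ℚ)) ^ r * (X ^ r * rescale ((u : ℚ) * v * x) (exp ℚ) *
            ((∑ i : Fin u, rescale ((v : ℚ) * (i : ℕ)) (exp ℚ)) *
              (rescale (v : ℚ) (exp ℚ) - 1)) ^ r) := by
          rw [mul_pow (C (u : ℚ)) X r,
            mul_pow (∑ i : Fin u, rescale ((v : ℚ) * ((i : ℕ) : ℚ)) (exp ℚ))
              (rescale (v : ℚ) (exp ℚ) - 1) r]
          ring
      _ = ((u : ℚ) ^ r) • ((PowerSeries.X : ℚ⟦X⟧) ^ r *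
            rescale ((u : ℚ) * v * x) (exp ℚ) *
            (rescale ((u : ℚ) * v) (exp ℚ) - 1) ^ r) := by
          rw [hg, smul_eq_C_mul, map_pow]
  have k1 := key w₁ w₂ hw₁
  have k2 := key w₂ w₁ hw₂
  rw [show (w₂ : ℚ) * w₁ * x = (w₁ : ℚ) * w₂ * x by ring,
    show (w₂ : ℚ) * w₁ = (w₁ : ℚ) * w₂ by ring] at k2
  -- cancel the common nonzero factor
  have hM : ((rescale (w₁ : ℚ) (exp ℚ) - 1) ^ r * (rescale (w₂ : ℚ) (exp ℚ) - 1) ^ r) ≠ 0 :=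
    mul_ne_zero (pow_ne_zero _ (rescale_exp_sub_one_ne_zero _ (Nat.cast_ne_zero.mpr hw₁.ne')))
      (pow_ne_zero _ (rescale_exp_sub_one_ne_zero _ (Nat.cast_ne_zero.mpr hw₂.ne')))
  have hcancel : ((w₂ : ℚ) ^ r) • rescale (w₁ : ℚ) (∑ j : Fin r → Fin w₁,
        PowerSeries.mk fun n => B ((w₂ : ℚ) * x + ((w₂ : ℚ) / w₁) * ∑ l, ((j l : ℕ) : ℚ)) n
          / n.factorial) =
      ((w₁ : ℚ) ^ r) • rescale (w₂ : ℚ) (∑ j : Fin r → Fin w₂,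
        PowerSeries.mk fun n => B ((w₁ : ℚ) * x + ((w₁ : ℚ) / w₂) * ∑ l, ((j l : ℕ) : ℚ)) n
          / n.factorial) := by
    apply mul_right_cancel₀ hM
    rw [smul_mul_assoc, smul_mul_assoc, k1, show ((rescale (w₁ : ℚ) (exp ℚ) - 1) ^ r *
      (rescale (w₂ : ℚ) (exp ℚ) - 1) ^ r) = ((rescale (w₂ : ℚ) (exp ℚ) - 1) ^ r *
      (rescale (w₁ : ℚ) (exp ℚ) - 1) ^ r) by ring, k2, smul_smul, smul_smul, mul_comm]
  have hc := congrArg (coeff n) hcancel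
  simp only [map_smul, coeff_rescale, map_sum, coeff_mk, smul_eq_mul] at hc
  have hf : (n.factorial : ℚ) ≠ 0 := Nat.cast_ne_zero.mpr n.factorial_ne_zero
  have hu1 : (w₁ : ℚ) ≠ 0 := Nat.cast_ne_zero.mpr hw₁.ne'
  have hu2 : (w₂ : ℚ) ≠ 0 := Nat.cast_ne_zero.mpr hw₂.ne'
  have e : ∀ (m : ℕ) (c : ℚ) (g : (Fin r → Fin m) → ℚ),
      (∑ j : Fin r → Fin m, c * (g j / (n.factorial : ℚ)))
        = c * (∑ j : Fin r → Fin m, g j) / (n.factorial : ℚ) := by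
    intro m c g
    rw [mul_div_assoc, Finset.sum_div, Finset.mul_sum]
  rw [e, e] at hc
  have hc' : (w₂ : ℚ) ^ r * ((w₁ : ℚ) ^ n *
      ∑ j : Fin r → Fin w₁, B ((w₂ : ℚ) * x + ((w₂ : ℚ) / w₁) * ∑ l, ((j l : ℕ) : ℚ)) n) =
      (w₁ : ℚ) ^ r * ((w₂ : ℚ) ^ n *
      ∑ j : Fin r → Fin w₂, B ((w₁ : ℚ) * x + ((w₁ : ℚ) / w₂) * ∑ l, ((j l : ℕ) : ℚ)) n) := by
    rw [mul_div_assoc', mul_div_assoc', div_eq_div_iff hf hf] at hc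
    exact mul_right_cancel₀ hf hc
  rw [zpow_sub₀ hu1, zpow_sub₀ hu2, zpow_natCast, zpow_natCast, zpow_natCast, zpow_natCast,
    div_mul_eq_mul_div, div_mul_eq_mul_div,
    div_eq_div_iff (pow_ne_zero _ hu1) (pow_ne_zero _ hu2)]
  linear_combination hc'
end

section
/- Let r be a positive integer, let w be a positive integer, and for each rational y let (B_n^{(r)}(y))_{n≥0} be the higher-order Bernoulli polynomial values, i.e. the rationals determined by (Σ_{n≥0} B_n^{(r)}(y) tⁿ/n!)·(exp(t) − 1)^r = t^r·exp(yt) in ℚ[[t]]. Then for every n ≥ 0 and every rational x, B_n^{(r)}(wx) = w^{n−r} · Σ_{j₁,…,j_r=0}^{w−1} B_n^{(r)}(x + (j₁+⋯+j_r)/w). -/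
open PowerSeries

private lemma mk_eq_rescale_exp (y : ℚ) :
    (PowerSeries.mk fun n => y ^ n / n.factorial) = rescale y (exp ℚ) := by
  ext n
  simp [coeff_rescale, coeff_exp, div_eq_mul_inv]

private lemma exp_sub_one_ne_zero : (exp ℚ - 1) ≠ 0 := by
  intro h
  have := congrArg (coeff 1) h
  simp [coeff_exp] at this

private lemma exp_pow_sub_one_ne_zero (w : ℕ) (hw : 0 < w) : (exp ℚ ^ w - 1) ≠ 0 := by
  intro h
  have := congrArg (coeff 1) h
  rw [exp_pow_eq_rescale_exp] at this
  simp [coeff_rescale, coeff_exp] at this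
  exact_mod_cast absurd this hw.ne'

theorem higher_bernoulli_multiplication (r : ℕ) (hr : 0 < r)
    (w : ℕ) (hw : 0 < w) (B : ℚ → ℕ → ℚ)
    (hB : ∀ y : ℚ,
      (PowerSeries.mk fun n => B y n / n.factorial) * (PowerSeries.exp ℚ - 1) ^ r =
        PowerSeries.X ^ r * PowerSeries.mk fun n => y ^ n / n.factorial) :
    ∀ (n : ℕ) (x : ℚ),
      B ((w : ℚ) * x) n =
        (w : ℚ) ^ ((n : ℤ) - r) *
          ∑ j : Fin r → Fin w, B (x + (∑ l, ((j l : ℕ) : ℚ)) / w) n := by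
  intro n x
  have hw0 : (w : ℚ) ≠ 0 := Nat.cast_ne_zero.2 hw.ne'
  -- rescaled version of each hB
  have key : ∀ j : Fin r → Fin w,
      rescale (w : ℚ) (PowerSeries.mk fun n => B (x + (∑ l, ((j l : ℕ) : ℚ)) / w) n / n.factorial)
        * (exp ℚ ^ w - 1) ^ r =
      (C (w : ℚ)) ^ r * X ^ r * rescale ((w : ℚ) * x) (exp ℚ) * exp ℚ ^ (∑ l, ((j l : ℕ))) := by
    intro j
    have h := congrArg (rescale (w : ℚ)) (hB (x + (∑ l, ((j l : ℕ) : ℚ)) / w))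
    rw [map_mul, map_mul, map_pow, map_pow, map_sub, map_one, rescale_X,
      mk_eq_rescale_exp, rescale_rescale, ← exp_pow_eq_rescale_exp, mul_pow] at h
    have harg : (x + (∑ l, ((j l : ℕ) : ℚ)) / w) * w
        = (w : ℚ) * x + (((∑ l, (j l : ℕ)) : ℕ) : ℚ) := by
      push_cast
      field_simp
    rw [h, exp_pow_eq_rescale_exp, harg, ← exp_mul_exp_eq_exp_add]
    ring
  -- combinatorial expansion of the power of a geometric sum
  have hexpand : (∑ k : Fin w, exp ℚ ^ (k : ℕ)) ^ r
      = ∑ j : Fin r → Fin w, exp ℚ ^ (∑ l, ((j l : ℕ))) := by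
    have h1 : (∑ k : Fin w, exp ℚ ^ (k : ℕ)) ^ r
        = ∏ _i : Fin r, (∑ k : Fin w, exp ℚ ^ (k : ℕ)) := by
      rw [Finset.prod_const, Finset.card_univ, Fintype.card_fin]
    rw [h1, Finset.prod_univ_sum]
    simp [Finset.prod_pow_eq_pow_sum]
  -- geometric sum identity
  have hgeom : (∑ k : Fin w, exp ℚ ^ (k : ℕ)) * (exp ℚ - 1) = exp ℚ ^ w - 1 := by
    rw [Fin.sum_univ_eq_sum_range (fun k => exp ℚ ^ k), geom_sum_mul]
  -- sum over j of the rescaled identities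
  have hsum : rescale (w : ℚ)
        (∑ j : Fin r → Fin w,
          PowerSeries.mk fun n => B (x + (∑ l, ((j l : ℕ) : ℚ)) / w) n / n.factorial)
        * (exp ℚ ^ w - 1) ^ r =
      (C (w : ℚ)) ^ r * X ^ r * rescale ((w : ℚ) * x) (exp ℚ)
        * (∑ k : Fin w, exp ℚ ^ (k : ℕ)) ^ r := by
    rw [map_sum, Finset.sum_mul, hexpand, Finset.mul_sum]
    exact Finset.sum_congr rfl fun j _ => key j
  -- cancel to get the power-series identity
  have main : rescale (w : ℚ)
        (∑ j : Fin r → Fin w,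
          PowerSeries.mk fun n => B (x + (∑ l, ((j l : ℕ) : ℚ)) / w) n / n.factorial)
      = (C (w : ℚ)) ^ r * PowerSeries.mk (fun n => B ((w : ℚ) * x) n / n.factorial) := by
    have h2 : X ^ r * rescale ((w : ℚ) * x) (exp ℚ)
        = (PowerSeries.mk fun n => B ((w : ℚ) * x) n / n.factorial) * (exp ℚ - 1) ^ r := by
      rw [hB ((w : ℚ) * x), mk_eq_rescale_exp]
    apply mul_right_cancel₀ (pow_ne_zero r exp_sub_one_ne_zero)
    apply mul_right_cancel₀ (pow_ne_zero r (exp_pow_sub_one_ne_zero w hw))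
    calc _ = rescale (w : ℚ) _ * (exp ℚ ^ w - 1) ^ r * (exp ℚ - 1) ^ r := by ring
    _ = (C (w : ℚ)) ^ r * (X ^ r * rescale ((w : ℚ) * x) (exp ℚ))
          * ((∑ k : Fin w, exp ℚ ^ (k : ℕ)) ^ r * (exp ℚ - 1) ^ r) := by rw [hsum]; ring
    _ = (C (w : ℚ)) ^ r * ((PowerSeries.mk fun n => B ((w : ℚ) * x) n / n.factorial)
          * (exp ℚ - 1) ^ r) * (exp ℚ ^ w - 1) ^ r := by rw [← mul_pow, hgeom, h2]
    _ = _ := by ring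
  -- extract coefficient n
  have hc := congrArg (coeff n) main
  simp only [coeff_rescale, map_sum, ← map_pow, coeff_C_mul, coeff_mk] at hc
  rw [← Finset.mul_sum, ← Finset.sum_div] at hc
  have hfac : ((n.factorial : ℚ)) ≠ 0 := Nat.cast_ne_zero.2 n.factorial_ne_zero
  have hc' : (w : ℚ) ^ n * (∑ j : Fin r → Fin w, B (x + (∑ l, ((j l : ℕ) : ℚ)) / w) n)
      = (w : ℚ) ^ r * B ((w : ℚ) * x) n := by
    rw [← mul_div_assoc, ← mul_div_assoc, div_eq_div_iff hfac hfac] at hc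
    exact mul_right_cancel₀ hfac hc
  have hz : (w : ℚ) ^ ((n : ℤ) - r) = (w : ℚ) ^ n / (w : ℚ) ^ r := by
    rw [zpow_sub₀ hw0, zpow_natCast, zpow_natCast]
  rw [hz, div_mul_eq_mul_div, eq_div_iff (pow_ne_zero r hw0)]
  linear_combination -hc'
end

section
/- Let r be a positive integer, λ a real number, and w₁, w₂ positive integers. For each real parameter μ and real y, let (B_{n,μ}^{(r)}(y))_{n≥0} be the higher-order degenerate Bernoulli polynomial values, i.e. the reals determined by (Σ_{n≥0} B_{n,μ}^{(r)}(y) tⁿ/n!)·(exp(L_μ(t)) − 1)^r = L_μ(t)^r·exp(y·L_μ(t)) in ℝ[[t]]. Then for every n ≥ 0 and every real x, w₁^{n−r} · Σ_{j₁,…,j_r=0}^{w₁−1} B_{n,λ/w₁}^{(r)}(w₂x + (w₂/w₁)(j₁+⋯+j_r)) = w₂^{n−r} · Σ_{j₁,…,j_r=0}^{w₂−1} B_{n,λ/w₂}^{(r)}(w₁x + (w₁/w₂)(j₁+⋯+j_r)). -/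
open PowerSeries Finset

lemma constantCoeff_Lser (lam : ℝ) : constantCoeff (Lser lam) = 0 := by
  rw [← coeff_zero_eq_constantCoeff_apply]
  simp [Lser]

lemma coeff_one_Lser (lam : ℝ) : coeff 1 (Lser lam) = 1 := by
  simp [Lser]

lemma coeff_pow_eq_zero {S : PowerSeries ℝ} (hS : constantCoeff S = 0) {n m : ℕ}
    (h : n < m) : coeff n (S ^ m) = 0 := by
  have hd : (X : PowerSeries ℝ) ^ m ∣ S ^ m := pow_dvd_pow_of_dvd (X_dvd_iff.2 hS) m
  exact (X_pow_dvd_iff.1 hd) n h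

lemma coeff_mul_pow_eq_zero {S T : PowerSeries ℝ} (hS : constantCoeff S = 0)
    (hT : constantCoeff T = 0) {n a b : ℕ} (h : n < a + b) :
    coeff n (S ^ a * T ^ b) = 0 := by
  have hd : (X : PowerSeries ℝ) ^ (a + b) ∣ S ^ a * T ^ b := by
    rw [pow_add]
    exact mul_dvd_mul (pow_dvd_pow_of_dvd (X_dvd_iff.2 hS) a)
      (pow_dvd_pow_of_dvd (X_dvd_iff.2 hT) b)
  exact (X_pow_dvd_iff.1 hd) n h

lemma coeff_expPS (S : PowerSeries ℝ) (n : ℕ) :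
    coeff n (expPS S) = ∑ m ∈ range (n + 1), (coeff n (S ^ m)) / m.factorial := by
  simp [expPS]

lemma coeff_expPS_of_ge {S : PowerSeries ℝ} (hS : constantCoeff S = 0) {n N : ℕ}
    (h : n < N) :
    coeff n (expPS S) = ∑ m ∈ range N, (coeff n (S ^ m)) / m.factorial := by
  rw [coeff_expPS]
  apply Finset.sum_subset
  · exact Finset.range_subset_range.2 h
  · intro m _ hm
    rw [coeff_pow_eq_zero hS (by simpa using hm)]
    simp

lemma expPS_zero : expPS 0 = 1 := by
  ext n
  rw [coeff_expPS]
  cases n with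
  | zero => simp
  | succ k =>
      rw [Finset.sum_eq_zero, coeff_one]
      · simp
      · intro m hm
        cases m with
        | zero => simp [coeff_one]
        | succ l => simp [zero_pow]

lemma coeff_mul_congr {f f' g g' : PowerSeries ℝ} {n : ℕ}
    (hf : ∀ i ≤ n, coeff i f = coeff i f') (hg : ∀ i ≤ n, coeff i g = coeff i g') :
    coeff n (f * g) = coeff n (f' * g') := by
  rw [coeff_mul, coeff_mul]
  apply Finset.sum_congr rfl
  intro p hp
  rw [Finset.HasAntidiagonal.mem_antidiagonal] at hp
  rw [hf p.1 (by omega), hg p.2 (by omega)]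

noncomputable def PP (S : PowerSeries ℝ) (n : ℕ) : PowerSeries ℝ :=
  ∑ a ∈ range (n + 1), ((a.factorial : ℝ)⁻¹) • S ^ a

lemma coeff_PP {S : PowerSeries ℝ} (hS : constantCoeff S = 0) {i n : ℕ} (h : i ≤ n) :
    coeff i (PP S n) = coeff i (expPS S) := by
  rw [PP, map_sum, coeff_expPS]
  rw [← Finset.sum_subset (Finset.range_subset_range.2 (by omega : i + 1 ≤ n + 1))]
  · apply Finset.sum_congr rfl
    intro a _
    rw [map_smul, smul_eq_mul, div_eq_inv_mul]
  · intro a _ ha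
    rw [map_smul, coeff_pow_eq_zero hS (by simpa using ha), smul_zero]

lemma triangle_eq_square (F : ℕ → ℕ → ℝ) (n : ℕ) (hF : ∀ a b, n < a + b → F a b = 0) :
    ∑ m ∈ range (n + 1), ∑ a ∈ range (m + 1), F a (m - a) =
      ∑ a ∈ range (n + 1), ∑ b ∈ range (n + 1), F a b := by
  have h1 : ∀ m, ∑ a ∈ range (m + 1), F a (m - a) = ∑ p ∈ Finset.HasAntidiagonal.antidiagonal m, F p.1 p.2 :=
    fun m => (Finset.Nat.sum_antidiagonal_eq_sum_range_succ F m).symm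
  simp_rw [h1]
  have hdisj : (↑(range (n + 1) : Finset ℕ) : Set ℕ).PairwiseDisjoint Finset.HasAntidiagonal.antidiagonal := by
    intro m _ m' _ hmm
    simp only [Function.onFun]
    rw [Finset.disjoint_left]
    intro p hp hp'
    rw [Finset.HasAntidiagonal.mem_antidiagonal] at hp hp'
    omega
  rw [← Finset.sum_biUnion hdisj, ← Finset.sum_product']
  apply Finset.sum_subset
  · intro p hp
    rw [Finset.mem_biUnion] at hp
    obtain ⟨m, hm, hpm⟩ := hp
    rw [Finset.HasAntidiagonal.mem_antidiagonal] at hpm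
    rw [Finset.mem_range] at hm
    rw [Finset.mem_product, Finset.mem_range, Finset.mem_range]
    omega
  · intro p hp hnp
    apply hF
    by_contra hle
    apply hnp
    rw [Finset.mem_biUnion]
    exact ⟨p.1 + p.2, Finset.mem_range.2 (by omega), Finset.HasAntidiagonal.mem_antidiagonal.2 rfl⟩

lemma expPS_add {S T : PowerSeries ℝ} (hS : constantCoeff S = 0)
    (hT : constantCoeff T = 0) : expPS (S + T) = expPS S * expPS T := by
  ext n
  have hST : constantCoeff (S + T) = 0 := by rw [map_add, hS, hT, add_zero]
  have hR : coeff n (PP S n * PP T n) = coeff n (expPS S * expPS T) :=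
    coeff_mul_congr (fun i hi => coeff_PP hS hi) (fun i hi => coeff_PP hT hi)
  rw [← hR]
  have hsq : coeff n (PP S n * PP T n) =
      ∑ a ∈ range (n + 1), ∑ b ∈ range (n + 1),
        (a.factorial : ℝ)⁻¹ * (b.factorial : ℝ)⁻¹ * coeff n (S ^ a * T ^ b) := by
    rw [PP, PP, Finset.sum_mul_sum]
    rw [map_sum]
    apply Finset.sum_congr rfl
    intro a _
    rw [map_sum]
    apply Finset.sum_congr rfl
    intro b _
    rw [smul_mul_smul_comm, map_smul, smul_eq_mul]
  rw [hsq, coeff_expPS]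
  have hL : ∀ m ∈ range (n + 1), coeff n ((S + T) ^ m) / m.factorial =
      ∑ a ∈ range (m + 1),
        (a.factorial : ℝ)⁻¹ * ((m - a).factorial : ℝ)⁻¹ * coeff n (S ^ a * T ^ (m - a)) := by
    intro m _
    rw [add_pow, map_sum, Finset.sum_div]
    apply Finset.sum_congr rfl
    intro a ha
    rw [Finset.mem_range] at ha
    have hfac : (m.choose a : ℝ) / m.factorial
        = (a.factorial : ℝ)⁻¹ * ((m - a).factorial : ℝ)⁻¹ := by
      have := Nat.choose_mul_factorial_mul_factorial (by omega : a ≤ m)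
      field_simp
      rw [← this]
      push_cast
      ring
    rw [← map_natCast (C (R := ℝ)) (m.choose a), mul_comm, coeff_C_mul, mul_div_right_comm, hfac]
  rw [Finset.sum_congr rfl hL]
  exact triangle_eq_square
    (fun a b => (a.factorial : ℝ)⁻¹ * (b.factorial : ℝ)⁻¹ * coeff n (S ^ a * T ^ b)) n
    (fun a b hab => by beta_reduce; rw [coeff_mul_pow_eq_zero hS hT hab, mul_zero])

lemma rescale_expPS (c : ℝ) (S : PowerSeries ℝ) :
    rescale c (expPS S) = expPS (rescale c S) := by
  ext n
  rw [coeff_rescale, coeff_expPS, coeff_expPS, Finset.mul_sum]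
  apply Finset.sum_congr rfl
  intro m _
  rw [← map_pow, coeff_rescale, mul_div_assoc]

lemma rescale_C' (c a : ℝ) : rescale c (C a) = C a := by
  ext n
  rw [coeff_rescale]
  cases n with
  | zero => simp
  | succ k => simp [coeff_C]

lemma constantCoeff_C_mul_Lser (y lam : ℝ) :
    constantCoeff (C y * Lser lam) = 0 := by
  rw [map_mul, constantCoeff_Lser, mul_zero]

lemma expPS_C_nat_mul (lam c : ℝ) (k : ℕ) :
    expPS (C ((k : ℝ) * c) * Lser lam) = expPS (C c * Lser lam) ^ k := by
  induction k with
  | zero => simp [expPS_zero]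
  | succ m ih =>
      have : (C (((m + 1 : ℕ) : ℝ) * c) * Lser lam)
          = C ((m : ℝ) * c) * Lser lam + C c * Lser lam := by
        rw [show ((m + 1 : ℕ) : ℝ) * c = (m : ℝ) * c + c by push_cast; ring, map_add, add_mul]
      rw [this, expPS_add (constantCoeff_C_mul_Lser _ _) (constantCoeff_C_mul_Lser _ _), ih,
        pow_succ]

lemma rescale_Lser (w : ℕ) (hw : 0 < w) (lam : ℝ) :
    rescale (w : ℝ) (Lser (lam / w)) = C (w : ℝ) * Lser lam := by
  have hw0 : (w : ℝ) ≠ 0 := Nat.cast_ne_zero.2 hw.ne'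
  ext n
  rw [coeff_rescale, coeff_C_mul]
  cases n with
  | zero => simp [Lser]
  | succ k =>
      simp only [Lser, coeff_mk, Nat.succ_ne_zero, if_false, Nat.add_sub_cancel]
      rw [div_pow, pow_succ]
      field_simp

lemma coeff_one_expPS_C_mul (c lam : ℝ) :
    coeff 1 (expPS (C c * Lser lam)) = c := by
  rw [coeff_expPS]
  rw [show Finset.range (1 + 1) = {0, 1} by rfl]
  rw [Finset.sum_insert (by simp), Finset.sum_singleton]
  simp [coeff_C_mul, coeff_one_Lser]

lemma expPS_sum_C {ι : Type*} (s : Finset ι) (c : ι → ℝ) (lam : ℝ) :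
    expPS (C (∑ i ∈ s, c i) * Lser lam) = ∏ i ∈ s, expPS (C (c i) * Lser lam) := by
  induction s using Finset.cons_induction with
  | empty => simp [expPS_zero]
  | cons a s ha ih =>
      rw [Finset.sum_cons, Finset.prod_cons, map_add, add_mul,
        expPS_add (constantCoeff_C_mul_Lser _ _) (constantCoeff_C_mul_Lser _ _), ih]

lemma side_eq (r : ℕ) (lam : ℝ) (w₁ w₂ : ℕ) (hw₁ : 0 < w₁) (hw₂ : 0 < w₂)
    (B : ℝ → ℝ → ℕ → ℝ)
    (hB : ∀ μ y : ℝ,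
      (PowerSeries.mk fun n => B μ y n / n.factorial) * (expPS (Lser μ) - 1) ^ r =
        Lser μ ^ r * expPS (PowerSeries.C y * Lser μ)) (x : ℝ) :
    (rescale (w₁ : ℝ) (PowerSeries.mk fun n =>
        (∑ j : Fin r → Fin w₁,
          B (lam / w₁) ((w₂ : ℝ) * x + ((w₂ : ℝ) / w₁) * ∑ l, ((j l : ℕ) : ℝ)) n) /
          n.factorial))
      * ((expPS (C (w₁ : ℝ) * Lser lam) - 1) * (expPS (C (w₂ : ℝ) * Lser lam) - 1)) ^ r
    = (C (w₁ : ℝ) * Lser lam) ^ r * expPS (C ((w₁ : ℝ) * (w₂ : ℝ) * x) * Lser lam)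
      * (expPS (C ((w₁ : ℝ) * (w₂ : ℝ)) * Lser lam) - 1) ^ r := by
  have hw₁0 : (w₁ : ℝ) ≠ 0 := Nat.cast_ne_zero.2 hw₁.ne'
  set L := Lser lam with hL
  set U := expPS (C (w₂ : ℝ) * L) with hU
  set μ := lam / w₁ with hμ
  set y : (Fin r → Fin w₁) → ℝ :=
    fun j => (w₂ : ℝ) * x + ((w₂ : ℝ) / w₁) * ∑ l, ((j l : ℕ) : ℝ) with hy
  -- step 1: the mk series is a sum
  have h1 : (PowerSeries.mk fun n =>
      (∑ j : Fin r → Fin w₁, B μ (y j) n) / n.factorial)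
      = ∑ j : Fin r → Fin w₁, PowerSeries.mk fun n => B μ (y j) n / n.factorial := by
    ext n
    simp [Finset.sum_div]
  -- step 2: sum hB over j
  have h2 : (PowerSeries.mk fun n =>
      (∑ j : Fin r → Fin w₁, B μ (y j) n) / n.factorial) * (expPS (Lser μ) - 1) ^ r
      = Lser μ ^ r * ∑ j : Fin r → Fin w₁, expPS (C (y j) * Lser μ) := by
    rw [h1, Finset.sum_mul, Finset.mul_sum]
    exact Finset.sum_congr rfl fun j _ => hB μ (y j)
  -- step 3: rescale by w₁
  have h3 := congrArg (rescale (w₁ : ℝ)) h2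
  rw [map_mul, map_pow, map_sub, map_one, map_mul, map_pow, map_sum, rescale_expPS,
    rescale_Lser w₁ hw₁ lam] at h3
  have h4 : ∀ j : Fin r → Fin w₁,
      rescale (w₁ : ℝ) (expPS (C (y j) * Lser μ))
      = expPS (C ((w₁ : ℝ) * (w₂ : ℝ) * x) * L)
        * ∏ l, U ^ ((j l : ℕ)) := by
    intro j
    rw [rescale_expPS, map_mul, rescale_C', rescale_Lser w₁ hw₁ lam, ← mul_assoc,
      ← map_mul (C (R := ℝ))]
    have harg : y j * (w₁ : ℝ) = (w₁ : ℝ) * (w₂ : ℝ) * x + ∑ l, (w₂ : ℝ) * ((j l : ℕ) : ℝ) := by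
      rw [hy]
      rw [← Finset.mul_sum]
      field_simp
    rw [harg, map_add, add_mul,
      expPS_add (constantCoeff_C_mul_Lser _ _) (constantCoeff_C_mul_Lser _ _),
      expPS_sum_C]
    congr 1
    apply Finset.prod_congr rfl
    intro l _
    rw [show (w₂ : ℝ) * ((j l : ℕ) : ℝ) = ((j l : ℕ) : ℝ) * (w₂ : ℝ) by ring,
      expPS_C_nat_mul, hU]
  rw [Finset.sum_congr rfl (fun j _ => h4 j), ← Finset.mul_sum] at h3
  -- step 5: sum of products is a power of a geometric sum
  have h5 : (∑ j : Fin r → Fin w₁, ∏ l, U ^ ((j l : ℕ)))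
      = (∑ i ∈ range w₁, U ^ i) ^ r := by
    rw [← Fintype.piFinset_univ, ← Finset.prod_univ_sum (fun _ => (Finset.univ : Finset (Fin w₁)))
      (fun _ i => U ^ (i : ℕ)), Fin.sum_univ_eq_sum_range (fun i => U ^ i) w₁,
      Finset.prod_const, Finset.card_univ, Fintype.card_fin]
  rw [h5] at h3
  -- step 6: multiply both sides by (U - 1) ^ r and use the geometric series identity
  have h6 : (∑ i ∈ range w₁, U ^ i) ^ r * (U - 1) ^ r
      = (expPS (C ((w₁ : ℝ) * (w₂ : ℝ)) * L) - 1) ^ r := by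
    rw [← mul_pow, geom_sum_mul]
    congr 2
    rw [show (w₁ : ℝ) * (w₂ : ℝ) = ((w₁ : ℕ) : ℝ) * (w₂ : ℝ) by norm_cast,
      expPS_C_nat_mul, hU]
  calc rescale (w₁ : ℝ) (PowerSeries.mk fun n =>
        (∑ j : Fin r → Fin w₁, B μ (y j) n) / n.factorial)
        * ((expPS (C (w₁ : ℝ) * L) - 1) * (U - 1)) ^ r
      = rescale (w₁ : ℝ) (PowerSeries.mk fun n =>
          (∑ j : Fin r → Fin w₁, B μ (y j) n) / n.factorial)
        * (expPS (C (w₁ : ℝ) * L) - 1) ^ r * (U - 1) ^ r := by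
        rw [mul_pow]; ring
    _ = (C (w₁ : ℝ) * L) ^ r
        * (expPS (C ((w₁ : ℝ) * (w₂ : ℝ) * x) * L) * (∑ i ∈ range w₁, U ^ i) ^ r)
        * (U - 1) ^ r := by rw [h3]
    _ = (C (w₁ : ℝ) * L) ^ r * expPS (C ((w₁ : ℝ) * (w₂ : ℝ) * x) * L)
        * ((∑ i ∈ range w₁, U ^ i) ^ r * (U - 1) ^ r) := by ring
    _ = (C (w₁ : ℝ) * L) ^ r * expPS (C ((w₁ : ℝ) * (w₂ : ℝ) * x) * L)
        * (expPS (C ((w₁ : ℝ) * (w₂ : ℝ)) * L) - 1) ^ r := by rw [h6]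

theorem higher_degenerate_bernoulli_symmetric (r : ℕ) (hr : 0 < r) (lam : ℝ)
    (w₁ w₂ : ℕ) (hw₁ : 0 < w₁) (hw₂ : 0 < w₂) (B : ℝ → ℝ → ℕ → ℝ)
    (hB : ∀ μ y : ℝ,
      (PowerSeries.mk fun n => B μ y n / n.factorial) * (expPS (Lser μ) - 1) ^ r =
        Lser μ ^ r * expPS (PowerSeries.C y * Lser μ)) :
    ∀ (n : ℕ) (x : ℝ),
      (w₁ : ℝ) ^ ((n : ℤ) - r) *
          ∑ j : Fin r → Fin w₁,
            B (lam / w₁) ((w₂ : ℝ) * x + ((w₂ : ℝ) / w₁) * ∑ l, ((j l : ℕ) : ℝ)) n =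
        (w₂ : ℝ) ^ ((n : ℤ) - r) *
          ∑ j : Fin r → Fin w₂,
            B (lam / w₂) ((w₁ : ℝ) * x + ((w₁ : ℝ) / w₂) * ∑ l, ((j l : ℕ) : ℝ)) n := by
  intro n x
  have hw₁0 : (w₁ : ℝ) ≠ 0 := Nat.cast_ne_zero.2 hw₁.ne'
  have hw₂0 : (w₂ : ℝ) ≠ 0 := Nat.cast_ne_zero.2 hw₂.ne'
  have E₁ := side_eq r lam w₁ w₂ hw₁ hw₂ B hB x
  have E₂ := side_eq r lam w₂ w₁ hw₂ hw₁ B hB x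
  simp only [mul_comm (w₂ : ℝ) (w₁ : ℝ)] at E₂
  set L := Lser lam with hLdef
  set V := expPS (C (w₁ : ℝ) * L) with hV
  set U := expPS (C (w₂ : ℝ) * L) with hUdef
  have hVne : V - 1 ≠ 0 := by
    intro h
    have h' := congrArg (coeff 1) h
    rw [map_sub, hV, hLdef, coeff_one_expPS_C_mul] at h'
    simp [coeff_one] at h'
    omega
  have hUne : U - 1 ≠ 0 := by
    intro h
    have h' := congrArg (coeff 1) h
    rw [map_sub, hUdef, hLdef, coeff_one_expPS_C_mul] at h'
    simp [coeff_one] at h'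
    omega
  have hZ : ((V - 1) * (U - 1)) ^ r ≠ 0 := pow_ne_zero r (mul_ne_zero hVne hUne)
  have G : (C (w₂ : ℝ)) ^ r * rescale (w₁ : ℝ) (PowerSeries.mk fun n =>
        (∑ j : Fin r → Fin w₁,
          B (lam / w₁) ((w₂ : ℝ) * x + ((w₂ : ℝ) / w₁) * ∑ l, ((j l : ℕ) : ℝ)) n) /
          n.factorial)
      = (C (w₁ : ℝ)) ^ r * rescale (w₂ : ℝ) (PowerSeries.mk fun n =>
        (∑ j : Fin r → Fin w₂,
          B (lam / w₂) ((w₁ : ℝ) * x + ((w₁ : ℝ) / w₂) * ∑ l, ((j l : ℕ) : ℝ)) n) /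
          n.factorial) := by
    apply mul_right_cancel₀ hZ
    linear_combination (C (w₂ : ℝ)) ^ r * E₁ - (C (w₁ : ℝ)) ^ r * E₂
  have hco := congrArg (coeff n) G
  rw [← map_pow, ← map_pow, coeff_C_mul, coeff_C_mul, coeff_rescale, coeff_rescale,
    coeff_mk, coeff_mk] at hco
  have hfac : (n.factorial : ℝ) ≠ 0 := Nat.cast_ne_zero.2 n.factorial_ne_zero
  rw [zpow_sub₀ hw₁0, zpow_sub₀ hw₂0, zpow_natCast, zpow_natCast, zpow_natCast, zpow_natCast]
  field_simp at hco ⊢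
  linear_combination hco
end
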